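/- arXiv:2410.09711 — 5 statements merged into one kernel-verified Lean document; each statement's English description precedes it below -/
import Mathlib

section
/- Let γ(t) = (t, t², t³) and let S = { γ(t) + v γ'(t) : t ∈ ℝ, v ≠ 0 } ⊆ ℝ³ be the tangent surface generated by γ, where γ'(t) = (1, 2t, 3t²). Then dim_F(S) ≤ 1; equivalently, if μ is a nonzero finite Borel measure supported on S and β > 0 satisfies sup_{ξ∈ℝ³} |ξ|^{β/2}|μ̂(ξ)| < ∞, then β ≤ 1. -/
open MeasureTheory Real Set

/-- The Fourier transform of a measure on `ℝ^n`:  `μ̂(ξ) = ∫ e^{−2πi x·ξ} dμ(x)`. -/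
noncomputable def mft {n : ℕ} (μ : Measure (EuclideanSpace ℝ (Fin n)))
    (ξ : EuclideanSpace ℝ (Fin n)) : ℂ :=
  ∫ x, Complex.exp (((-2 * Real.pi * inner ℝ x ξ : ℝ) : ℂ) * Complex.I) ∂μ

/-- The Fourier dimension of a set `A ⊆ ℝ^n`. -/
noncomputable def fourierDim {n : ℕ} (A : Set (EuclideanSpace ℝ (Fin n))) : ℝ :=
  sSup {s : ℝ | 0 ≤ s ∧ s ≤ (n : ℝ) ∧
    ∃ μ : Measure (EuclideanSpace ℝ (Fin n)), IsFiniteMeasure μ ∧ μ ≠ 0 ∧ μ Aᶜ = 0 ∧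
      ∃ C : ℝ, ∀ ξ : EuclideanSpace ℝ (Fin n), ‖ξ‖ ^ (s / 2) * ‖mft μ ξ‖ ≤ C}

/-- A point of `ℝ³` from three coordinates. -/
noncomputable def pt3 (x y z : ℝ) : EuclideanSpace ℝ (Fin 3) :=
  (EuclideanSpace.equiv (Fin 3) ℝ).symm ![x, y, z]

namespace TS
noncomputable def cV (p : EuclideanSpace ℝ (Fin 3)) : ℝ :=
  (p 2 + 2*(p 0)^3 - 3*(p 0)*(p 1)) / (2*((p 0)^2 - p 1))
noncomputable def cT (p : EuclideanSpace ℝ (Fin 3)) : ℝ := p 0 - cV p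
noncomputable def ph (t : ℝ) (p : EuclideanSpace ℝ (Fin 3)) : ℝ :=
  3*t^2 * p 0 - 3*t * p 1 + p 2
noncomputable def nv (t : ℝ) : EuclideanSpace ℝ (Fin 3) := pt3 (3*t^2) (-(3*t)) 1

lemma meas_coord (i : Fin 3) : Measurable (fun p : EuclideanSpace ℝ (Fin 3) => p i) :=
  ((continuous_apply i).comp (EuclideanSpace.equiv (Fin 3) ℝ).continuous).measurable
lemma cont_coord (i : Fin 3) : Continuous (fun p : EuclideanSpace ℝ (Fin 3) => p i) :=
  (continuous_apply i).comp (EuclideanSpace.equiv (Fin 3) ℝ).continuous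
lemma meas_cV : Measurable cV := by
  apply Measurable.div <;> fun_prop (disch := exact fun _ => meas_coord _)
lemma meas_cT : Measurable cT := by
  exact (meas_coord 0).sub meas_cV

lemma inner_nv (p : EuclideanSpace ℝ (Fin 3)) (t c : ℝ) :
    (inner ℝ p (c • nv t) : ℝ) = c * ph t p := by
  rw [real_inner_smul_right]
  have : (inner ℝ p (nv t) : ℝ) = ph t p := by
    simp [PiLp.inner_apply, Fin.sum_univ_three, RCLike.inner_apply, nv, pt3, ph]
    ring
  rw [this]

lemma one_le_norm_nv (t : ℝ) : 1 ≤ ‖nv t‖ := by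
  rw [EuclideanSpace.norm_eq]
  have h1 : (1:ℝ) = Real.sqrt 1 := by simp
  rw [h1]
  apply Real.sqrt_le_sqrt
  have h0 : ∀ i : Fin 3, ‖nv t i‖ ^ 2 = (nv t i) ^ 2 := by
    intro i; rw [Real.norm_eq_abs, sq_abs]
  simp only [Fin.sum_univ_three, h0]
  have e0 : nv t 0 = 3*t^2 := rfl
  have e1 : nv t 1 = -(3*t) := rfl
  have e2 : nv t 2 = 1 := rfl
  rw [e0, e1, e2]; nlinarith [sq_nonneg t, sq_nonneg (t^2)]

lemma cV_eq {p : EuclideanSpace ℝ (Fin 3)} {t v : ℝ} (hv : v ≠ 0)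
    (h0 : p 0 = t + v) (h1 : p 1 = t^2 + 2*t*v) (h2 : p 2 = t^3 + 3*t^2*v) :
    cV p = v := by
  have hden : 2*((p 0)^2 - p 1) = 2*v^2 := by rw [h0, h1]; ring
  rw [cV, hden, div_eq_iff (by positivity), h0, h1, h2]; ring

lemma cT_eq {p : EuclideanSpace ℝ (Fin 3)} {t v : ℝ} (hv : v ≠ 0)
    (h0 : p 0 = t + v) (h1 : p 1 = t^2 + 2*t*v) (h2 : p 2 = t^3 + 3*t^2*v) :
    cT p = t := by
  rw [cT, cV_eq hv h0 h1 h2, h0]; ring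

lemma Phi_eq {p : EuclideanSpace ℝ (Fin 3)} {t' v : ℝ} (hv : v ≠ 0)
    (h0 : p 0 = t' + v) (h1 : p 1 = t'^2 + 2*t'*v) (h2 : p 2 = t'^3 + 3*t'^2*v) (t : ℝ) :
    t^3 - ph t p = (t - cT p)^3 - 3 * cV p * (t - cT p)^2 := by
  rw [cT_eq hv h0 h1 h2, cV_eq hv h0 h1 h2, ph, h0, h1, h2]; ring

lemma integrable_abs_rpow_mul_exp_neg_mul_sq {b s : ℝ} (hb : 0 < b) (hs : -1 < s) :
    Integrable fun x : ℝ => |x| ^ s * Real.exp (-b * x ^ 2) := by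
  have hpos : IntegrableOn (fun x : ℝ => |x| ^ s * Real.exp (-b * x ^ 2)) (Ioi 0) := by
    apply (integrableOn_rpow_mul_exp_neg_mul_sq hb hs).congr_fun ?_ measurableSet_Ioi
    intro x hx; simp only []; rw [abs_of_pos hx]
  rw [← integrableOn_univ, ← @Iio_union_Ici _ _ (0 : ℝ), integrableOn_union,
    integrableOn_Ici_iff_integrableOn_Ioi]
  refine ⟨?_, hpos⟩
  rw [← (Measure.measurePreserving_neg (volume : Measure ℝ)).integrableOn_comp_preimage
      (Homeomorph.neg ℝ).measurableEmbedding]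
  simp only [Function.comp_def, neg_sq, neg_preimage, neg_Iio, neg_neg, neg_zero, abs_neg]
  exact hpos


lemma rpow_neg_anti {a b e : ℝ} (ha : 0 < a) (hab : a ≤ b) (he : 0 ≤ e) :
    b ^ (-e) ≤ a ^ (-e) := by
  rw [Real.rpow_neg ha.le, Real.rpow_neg (ha.trans_le hab).le]
  exact inv_anti₀ (Real.rpow_pos_of_pos ha e) (Real.rpow_le_rpow ha.le hab he)

lemma mft_abs_le (μ : Measure (EuclideanSpace ℝ (Fin 3))) [IsFiniteMeasure μ]
    (ξ : EuclideanSpace ℝ (Fin 3)) : ‖mft μ ξ‖ ≤ (μ univ).toReal := by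
  rw [mft]
  calc ‖∫ x, Complex.exp (((-2 * Real.pi * inner ℝ x ξ : ℝ) : ℂ) * Complex.I) ∂μ‖
      ≤ ∫ x, ‖Complex.exp (((-2 * Real.pi * inner ℝ x ξ : ℝ) : ℂ) * Complex.I)‖ ∂μ :=
        norm_integral_le_integral_norm _
    _ = ∫ (_ : EuclideanSpace ℝ (Fin 3)), (1:ℝ) ∂μ := by
        refine integral_congr_ae (Filter.Eventually.of_forall fun x => ?_)
        exact Complex.norm_exp_ofReal_mul_I _
    _ = (μ univ).toReal := by simp [Measure.real]

lemma nv_ne_zero (t : ℝ) : nv t ≠ 0 := by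
  intro h
  have h1 := one_le_norm_nv t
  rw [h, norm_zero] at h1
  linarith

set_option maxHeartbeats 2000000 in
lemma main (μ : Measure (EuclideanSpace ℝ (Fin 3))) [IsFiniteMeasure μ] (hμ0 : μ ≠ 0)
    (haeS : ∀ᵐ p ∂μ, ∃ t v : ℝ, v ≠ 0 ∧ p 0 = t + v ∧ p 1 = t^2 + 2*t*v ∧ p 2 = t^3 + 3*t^2*v)
    (β C : ℝ) (hβ1 : 1 < β) (hβ2 : β ≤ 3/2)
    (hC : ∀ ξ : EuclideanSpace ℝ (Fin 3), ξ ≠ 0 →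
      ‖mft μ ξ‖ ≤ C * ‖ξ‖ ^ (-(β/2))) : False := by
  have hCpos : 0 ≤ C := by
    have hξ : (pt3 1 0 0 : EuclideanSpace ℝ (Fin 3)) ≠ 0 := by
      intro h
      have h0 : (pt3 1 0 0 : EuclideanSpace ℝ (Fin 3)) 0 = 1 := rfl
      rw [h] at h0
      simpa using h0
    have h1 := hC _ hξ
    have h2 : 0 < ‖(pt3 1 0 0 : EuclideanSpace ℝ (Fin 3))‖ ^ (-(β/2)) :=
      Real.rpow_pos_of_pos (norm_pos_iff.mpr hξ) _
    nlinarith [norm_nonneg (mft μ (pt3 1 0 0))]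
  -- choose R
  set G : ℕ → Set (EuclideanSpace ℝ (Fin 3)) :=
    fun n => {p : EuclideanSpace ℝ (Fin 3) | |cT p| ≤ n ∧ |cV p| ≤ n} with hG
  have hGmeas : ∀ n, MeasurableSet (G n) := fun n =>
    (measurableSet_le meas_cT.abs measurable_const).inter
      (measurableSet_le meas_cV.abs measurable_const)
  have hGex : ∃ n : ℕ, μ (G n) ≠ 0 := by
    by_contra h
    push_neg at h
    have hU : μ (⋃ n, G n) = 0 := measure_iUnion_null h
    have hUuniv : (⋃ n, G n) = univ := by
      ext p
      simp only [mem_iUnion, mem_univ, iff_true, hG, mem_setOf_eq]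
      obtain ⟨n, hn⟩ := exists_nat_ge (max |cT p| |cV p|)
      exact ⟨n, (le_max_left _ _).trans hn, (le_max_right _ _).trans hn⟩
    rw [hUuniv, Measure.measure_univ_eq_zero] at hU
    exact hμ0 hU
  obtain ⟨N, hN⟩ := hGex
  set R : ℝ := (N : ℝ) + 1 with hR
  have hR1 : (1:ℝ) ≤ R := by
    have : (0:ℝ) ≤ (N:ℝ) := Nat.cast_nonneg N
    rw [hR]; linarith
  have hGsub : ∀ p ∈ G N, |cT p| ≤ R ∧ |cV p| ≤ R := by
    intro p hp
    exact ⟨hp.1.trans (by rw [hR]; linarith), hp.2.trans (by rw [hR]; linarith)⟩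
  set m : ℝ := (μ (G N)).toReal with hm
  have hmpos : 0 < m := ENNReal.toReal_pos hN (measure_ne_top μ _)
  -- constants
  have hψ_int : Integrable (fun t : ℝ => Real.exp (-π * t^2)) := integrable_exp_neg_mul_sq pi_pos
  have hw_int : Integrable (fun σ : ℝ => |σ| ^ (-(β/2)) * Real.exp (-π * σ^2)) :=
    integrable_abs_rpow_mul_exp_neg_mul_sq pi_pos (by linarith)
  set Iψ : ℝ := ∫ t : ℝ, Real.exp (-π * t^2) with hIψ
  set Iw : ℝ := ∫ σ : ℝ, |σ| ^ (-(β/2)) * Real.exp (-π * σ^2) with hIwdef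
  have hIψ0 : 0 ≤ Iψ := integral_nonneg fun t => (Real.exp_pos _).le
  have hIw0 : 0 ≤ Iw := integral_nonneg fun σ =>
    mul_nonneg (Real.rpow_nonneg (abs_nonneg _) _) (Real.exp_pos _).le
  set c1 : ℝ := Real.exp (-π * (R+1)^2) * Real.exp (-π) with hc1
  have hc1pos : 0 < c1 := mul_pos (Real.exp_pos _) (Real.exp_pos _)
  set c2 : ℝ := 2 * c1 * Real.sqrt (1/(1+3*R)) * m with hc2
  have hc2pos : 0 < c2 := by
    apply mul_pos (mul_pos (mul_pos two_pos hc1pos) (Real.sqrt_pos.mpr (by positivity))) hmpos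
  set K : ℝ := C * Iψ * Iw with hK
  -- the key estimate
  have key : ∀ Λ : ℝ, 1 ≤ Λ → c2 * Λ ^ (-(1/2 : ℝ)) ≤ K * Λ ^ (-(β/2)) := by
    intro Λ hΛ
    have hΛ0 : (0:ℝ) < Λ := lt_of_lt_of_le one_pos hΛ
    set F : ℝ × (ℝ × EuclideanSpace ℝ (Fin 3)) → ℂ := fun z =>
      Complex.exp (((2*π*Λ*((z.2.1)^3 - ph z.2.1 z.2.2) * z.1 : ℝ) : ℂ) * Complex.I)
        * ((Real.exp (-π * z.1^2) * Real.exp (-π * (z.2.1)^2) : ℝ) : ℂ) with hF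
    have hcoordz : ∀ i, Continuous fun z : ℝ × (ℝ × EuclideanSpace ℝ (Fin 3)) => z.2.2 i :=
      fun i => (cont_coord i).comp (continuous_snd.comp continuous_snd)
    have htz : Continuous fun z : ℝ × (ℝ × EuclideanSpace ℝ (Fin 3)) => z.2.1 :=
      continuous_fst.comp continuous_snd
    have hσz : Continuous fun z : ℝ × (ℝ × EuclideanSpace ℝ (Fin 3)) => z.1 := continuous_fst
    have hphz : Continuous fun z : ℝ × (ℝ × EuclideanSpace ℝ (Fin 3)) => ph z.2.1 z.2.2 := by
      unfold ph
      exact (((continuous_const.mul (htz.pow 2)).mul (hcoordz 0)).sub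
        ((continuous_const.mul htz).mul (hcoordz 1))).add (hcoordz 2)
    have hFc : Continuous F := by
      rw [hF]
      apply Continuous.mul
      · exact Complex.continuous_exp.comp ((Complex.continuous_ofReal.comp
          ((continuous_const.mul ((htz.pow 3).sub hphz)).mul hσz)).mul continuous_const)
      · exact Complex.continuous_ofReal.comp
          ((Real.continuous_exp.comp (continuous_const.mul (hσz.pow 2))).mul
           (Real.continuous_exp.comp (continuous_const.mul (htz.pow 2))))
    have hprod1 : Integrable (fun y : ℝ × EuclideanSpace ℝ (Fin 3) => Real.exp (-π * y.1^2))
        ((volume : Measure ℝ).prod μ) := by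
      have h := hψ_int.mul_prod (integrable_const (1:ℝ) (μ := μ))
      simpa using h
    have hbound : Integrable
        (fun z : ℝ × (ℝ × EuclideanSpace ℝ (Fin 3)) =>
          Real.exp (-π * z.1^2) * Real.exp (-π * z.2.1^2))
        ((volume : Measure ℝ).prod ((volume : Measure ℝ).prod μ)) :=
      hψ_int.mul_prod hprod1
    have hF_int : Integrable F ((volume : Measure ℝ).prod ((volume : Measure ℝ).prod μ)) := by
      apply hbound.mono' hFc.aestronglyMeasurable
      filter_upwards with z
      simp only [hF]
      rw [norm_mul, Complex.norm_exp_ofReal_mul_I, one_mul, Complex.norm_real, Real.norm_eq_abs,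
        abs_of_pos (by positivity)]
    set D : ℂ := ∫ z, F z ∂((volume : Measure ℝ).prod ((volume : Measure ℝ).prod μ)) with hD
    -- upper bound
    have hub : ‖D‖ ≤ K * Λ ^ (-(β/2)) := by
      rw [hD, integral_prod F hF_int]
      have hgint : Integrable (fun σ : ℝ =>
          (C * Iψ * Λ ^ (-(β/2))) * (|σ| ^ (-(β/2)) * Real.exp (-π*σ^2))) := hw_int.const_mul _
      have hσne : ∀ᵐ σ : ℝ ∂(volume : Measure ℝ), σ ≠ 0 := by
        refine ae_iff.mpr ?_
        simp only [ne_eq, not_not, setOf_eq_eq_singleton]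
        exact measure_singleton 0
      have hb : ∀ᵐ σ : ℝ ∂(volume : Measure ℝ),
          ‖∫ y, F (σ, y) ∂((volume : Measure ℝ).prod μ)‖ ≤
          (C * Iψ * Λ ^ (-(β/2))) * (|σ| ^ (-(β/2)) * Real.exp (-π*σ^2)) := by
        filter_upwards [hF_int.prod_right_ae, hσne] with σ hslice hσ0
        rw [integral_prod _ hslice]
        have hσabs : 0 < |σ| := abs_pos.mpr hσ0
        have hpt : ∀ t : ℝ, (∫ p, F (σ, (t, p)) ∂μ) =
            (Complex.exp (((2*π*Λ*t^3*σ : ℝ) : ℂ) * Complex.I)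
              * ((Real.exp (-π*σ^2) * Real.exp (-π*t^2) : ℝ) : ℂ)) * mft μ ((Λ * σ) • nv t) := by
          intro t
          rw [mft, ← integral_const_mul]
          apply integral_congr_ae
          filter_upwards with p
          simp only [hF]
          have harg : ((2*π*Λ*(t^3 - ph t p) * σ : ℝ) : ℂ) * Complex.I =
              ((2*π*Λ*t^3*σ : ℝ) : ℂ) * Complex.I
              + ((-2 * Real.pi * (inner ℝ p ((Λ * σ) • nv t) : ℝ) : ℝ) : ℂ) * Complex.I := by
            rw [inner_nv]
            push_cast
            ring
          rw [harg, Complex.exp_add]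
          ring
        simp_rw [hpt]
        have hgt : Integrable (fun t : ℝ =>
            (Real.exp (-π*σ^2) * (C * (Λ*|σ|) ^ (-(β/2)))) * Real.exp (-π*t^2)) :=
          hψ_int.const_mul _
        calc ‖∫ t, (Complex.exp (((2*π*Λ*t^3*σ : ℝ) : ℂ) * Complex.I)
              * ((Real.exp (-π*σ^2) * Real.exp (-π*t^2) : ℝ) : ℂ)) * mft μ ((Λ * σ) • nv t)‖
            ≤ ∫ t, (Real.exp (-π*σ^2) * (C * (Λ*|σ|) ^ (-(β/2)))) * Real.exp (-π*t^2) := by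
              apply norm_integral_le_of_norm_le hgt
              filter_upwards with t
              rw [norm_mul, norm_mul, Complex.norm_exp_ofReal_mul_I, one_mul, Complex.norm_real,
                Real.norm_eq_abs, abs_of_pos (by positivity)]
              have hξne : (Λ * σ) • nv t ≠ 0 :=
                smul_ne_zero (mul_ne_zero hΛ0.ne' hσ0) (nv_ne_zero t)
              have hnorm : Λ * |σ| ≤ ‖(Λ * σ) • nv t‖ := by
                rw [norm_smul, Real.norm_eq_abs, abs_mul, abs_of_pos hΛ0]
                calc Λ * |σ| = Λ * |σ| * 1 := by ring
                  _ ≤ Λ * |σ| * ‖nv t‖ := by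
                      apply mul_le_mul_of_nonneg_left (one_le_norm_nv t) (by positivity)
              have hmft : ‖mft μ ((Λ * σ) • nv t)‖ ≤ C * (Λ*|σ|) ^ (-(β/2)) := by
                calc ‖mft μ ((Λ * σ) • nv t)‖ ≤ C * ‖(Λ * σ) • nv t‖ ^ (-(β/2)) :=
                      hC _ hξne
                  _ ≤ C * (Λ*|σ|) ^ (-(β/2)) := by
                      apply mul_le_mul_of_nonneg_left
                        (rpow_neg_anti (by positivity) hnorm (by linarith)) hCpos
              calc Real.exp (-π*σ^2) * Real.exp (-π*t^2) * ‖mft μ ((Λ * σ) • nv t)‖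
                  ≤ Real.exp (-π*σ^2) * Real.exp (-π*t^2) * (C * (Λ*|σ|) ^ (-(β/2))) := by
                    apply mul_le_mul_of_nonneg_left hmft (by positivity)
                _ = (Real.exp (-π*σ^2) * (C * (Λ*|σ|) ^ (-(β/2)))) * Real.exp (-π*t^2) := by ring
          _ = (Real.exp (-π*σ^2) * (C * (Λ*|σ|) ^ (-(β/2)))) * Iψ := integral_const_mul _ _
          _ = (C * Iψ * Λ ^ (-(β/2))) * (|σ| ^ (-(β/2)) * Real.exp (-π*σ^2)) := by
              rw [Real.mul_rpow hΛ0.le (abs_nonneg σ)]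
              ring
      calc ‖∫ σ, (∫ y, F (σ, y) ∂((volume : Measure ℝ).prod μ))‖
          ≤ ∫ σ, (C * Iψ * Λ ^ (-(β/2))) * (|σ| ^ (-(β/2)) * Real.exp (-π*σ^2)) :=
            norm_integral_le_of_norm_le hgint hb
        _ = (C * Iψ * Λ ^ (-(β/2))) * Iw := integral_const_mul _ _
        _ = K * Λ ^ (-(β/2)) := by rw [hK]; ring
    -- lower bound
    have haeprod : ∀ᵐ y : ℝ × EuclideanSpace ℝ (Fin 3) ∂((volume : Measure ℝ).prod μ),
        ∃ t v : ℝ, v ≠ 0 ∧ y.2 0 = t + v ∧ y.2 1 = t^2 + 2*t*v ∧ y.2 2 = t^3 + 3*t^2*v := by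
      rw [ae_iff] at haeS ⊢
      have hset : {y : ℝ × EuclideanSpace ℝ (Fin 3) | ¬ ∃ t v : ℝ, v ≠ 0 ∧ y.2 0 = t + v ∧
          y.2 1 = t^2 + 2*t*v ∧ y.2 2 = t^3 + 3*t^2*v} =
          (univ : Set ℝ) ×ˢ {p : EuclideanSpace ℝ (Fin 3) | ¬ ∃ t v : ℝ, v ≠ 0 ∧ p 0 = t + v ∧
          p 1 = t^2 + 2*t*v ∧ p 2 = t^3 + 3*t^2*v} := by
        ext y
        simp [Set.mem_prod]
      rw [hset, Measure.prod_prod, haeS, mul_zero]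
    set GR : ℝ × EuclideanSpace ℝ (Fin 3) → ℝ := fun y => Real.exp (-π * y.1^2) *
      Real.exp (-π * (Λ * ((y.1 - cT y.2)^3 - 3 * cV y.2 * (y.1 - cT y.2)^2))^2) with hGR
    have hGRpos : ∀ y, 0 < GR y := fun y => mul_pos (Real.exp_pos _) (Real.exp_pos _)
    have hGRmeas : Measurable GR := by
      have hT2 : Measurable fun y : ℝ × EuclideanSpace ℝ (Fin 3) => cT y.2 :=
        meas_cT.comp measurable_snd
      have hV2 : Measurable fun y : ℝ × EuclideanSpace ℝ (Fin 3) => cV y.2 :=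
        meas_cV.comp measurable_snd
      have h1 : Measurable fun y : ℝ × EuclideanSpace ℝ (Fin 3) => y.1 := measurable_fst
      apply Measurable.mul
      · exact Real.measurable_exp.comp ((h1.pow_const 2).const_mul (-π))
      · exact Real.measurable_exp.comp
          (((((((h1.sub hT2).pow_const 3).sub
            ((hV2.const_mul 3).mul ((h1.sub hT2).pow_const 2))).const_mul Λ).pow_const 2)).const_mul (-π))
    have hGRbd : ∀ y : ℝ × EuclideanSpace ℝ (Fin 3), GR y ≤ Real.exp (-π * y.1^2) := by
      intro y
      have h2 : Real.exp (-π * (Λ * ((y.1 - cT y.2)^3 - 3 * cV y.2 * (y.1 - cT y.2)^2))^2) ≤ 1 := by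
        rw [← Real.exp_zero]
        apply Real.exp_le_exp.mpr
        have := sq_nonneg (Λ * ((y.1 - cT y.2)^3 - 3 * cV y.2 * (y.1 - cT y.2)^2))
        nlinarith [pi_pos]
      calc GR y ≤ Real.exp (-π * y.1^2) * 1 := by
            rw [hGR]
            exact mul_le_mul_of_nonneg_left h2 (Real.exp_pos _).le
        _ = Real.exp (-π * y.1^2) := mul_one _
    have hGR_int : Integrable GR ((volume : Measure ℝ).prod μ) := by
      apply hprod1.mono' hGRmeas.aestronglyMeasurable
      filter_upwards with y
      rw [Real.norm_eq_abs, abs_of_pos (hGRpos y)]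
      exact hGRbd y
    -- representation
    have hrepr : D = ((∫ y, GR y ∂((volume : Measure ℝ).prod μ) : ℝ) : ℂ) := by
      have hco : ∫ y, ((GR y : ℝ) : ℂ) ∂((volume : Measure ℝ).prod μ)
          = ((∫ y, GR y ∂((volume : Measure ℝ).prod μ) : ℝ) : ℂ) := integral_ofReal
      rw [hD, integral_prod_symm F hF_int, ← hco]
      apply integral_congr_ae
      filter_upwards [haeprod] with y hy
      obtain ⟨t', v, hv, h0, h1, h2⟩ := hy
      have hΦ : y.1^3 - ph y.1 y.2 =
          (y.1 - cT y.2)^3 - 3 * cV y.2 * (y.1 - cT y.2)^2 := Phi_eq hv h0 h1 h2 y.1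
      set Φ : ℝ := (y.1 - cT y.2)^3 - 3 * cV y.2 * (y.1 - cT y.2)^2 with hΦdef
      have hFσ : ∀ σ : ℝ, F (σ, y) = ((Real.exp (-π * y.1^2) : ℝ) : ℂ) *
          (Complex.exp (Complex.I * ((2*π*Λ*Φ : ℝ) : ℂ) * (σ : ℂ))
            * Complex.exp (-(π:ℂ) * (σ:ℂ)^2)) := by
        intro σ
        show Complex.exp (((2*π*Λ*((y.1)^3 - ph y.1 y.2) * σ : ℝ) : ℂ) * Complex.I)
            * ((Real.exp (-π * σ^2) * Real.exp (-π * (y.1)^2) : ℝ) : ℂ) = _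
        rw [hΦ]
        rw [show ((Real.exp (-π * σ^2) * Real.exp (-π * (y.1)^2) : ℝ) : ℂ)
            = Complex.exp (((-π * σ^2 : ℝ) : ℂ) + ((-π * y.1^2 : ℝ) : ℂ)) by
          rw [Complex.exp_add, ← Complex.ofReal_exp, ← Complex.ofReal_exp, ← Complex.ofReal_mul]]
        rw [show ((Real.exp (-π * y.1^2) : ℝ) : ℂ) = Complex.exp ((-π * y.1^2 : ℝ) : ℂ) from
          Complex.ofReal_exp _]
        rw [← Complex.exp_add, ← Complex.exp_add, ← Complex.exp_add]
        congr 1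
        push_cast
        ring
      rw [integral_congr_ae (ae_of_all _ hFσ), integral_const_mul,
        fourierIntegral_gaussian (by simpa using pi_pos) ((2*π*Λ*Φ : ℝ) : ℂ)]
      have hπne : ((π : ℝ) : ℂ) ≠ 0 := Complex.ofReal_ne_zero.mpr pi_ne_zero
      rw [div_self hπne, Complex.one_cpow, one_mul]
      rw [show -((2*π*Λ*Φ : ℝ) : ℂ)^2 / (4 * ((π : ℝ) : ℂ)) = ((-π * (Λ*Φ)^2 : ℝ) : ℂ) by
        rw [div_eq_iff (by simpa using pi_ne_zero : (4:ℂ) * ((π : ℝ) : ℂ) ≠ 0)]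
        push_cast; ring]
      rw [← Complex.ofReal_exp, ← Complex.ofReal_mul]
    set Dr : ℝ := ∫ y, GR y ∂((volume : Measure ℝ).prod μ) with hDr
    -- lower bound for Dr
    set δ : ℝ := Real.sqrt (1/(Λ*(1+3*R))) with hδ
    have hδpos : 0 < δ := Real.sqrt_pos.mpr (by positivity)
    have hδ1 : δ ≤ 1 := by
      rw [hδ]
      have harg : 1/(Λ*(1+3*R)) ≤ 1 := by
        rw [div_le_one (by positivity)]
        nlinarith
      calc Real.sqrt (1/(Λ*(1+3*R))) ≤ Real.sqrt 1 := Real.sqrt_le_sqrt harg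
        _ = 1 := Real.sqrt_one
    have hδsq : δ^2 = 1/(Λ*(1+3*R)) := Real.sq_sqrt (by positivity)
    have hinner : ∀ p ∈ G N, 2*δ*c1 ≤ ∫ t, GR (t, p) := by
      intro p hp
      obtain ⟨hpT, hpV⟩ := hGsub p hp
      have hint_t : Integrable (fun t => GR (t, p)) := by
        apply hψ_int.mono' ((hGRmeas.comp (measurable_id.prodMk measurable_const)).aestronglyMeasurable)
        filter_upwards with t
        show ‖GR (t, p)‖ ≤ Real.exp (-π * t^2)
        rw [Real.norm_eq_abs, abs_of_pos (hGRpos _)]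
        exact hGRbd (t, p)
      have hvol : (volume (Icc (cT p - δ) (cT p + δ))).toReal = 2*δ := by
        rw [Real.volume_Icc, ENNReal.toReal_ofReal (by linarith)]
        ring
      have hconst : ∀ t ∈ Icc (cT p - δ) (cT p + δ), c1 ≤ GR (t, p) := by
        intro t ht
        obtain ⟨ht1, ht2⟩ := ht
        have habs : |t - cT p| ≤ δ := abs_le.mpr ⟨by linarith, by linarith⟩
        have hTabs := abs_le.mp hpT
        have hVabs := abs_le.mp hpV
        have habs' := abs_le.mp habs
        show c1 ≤ Real.exp (-π * t^2) *
          Real.exp (-π * (Λ * ((t - cT p)^3 - 3 * cV p * (t - cT p)^2))^2)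
        rw [hc1]
        apply mul_le_mul ?_ ?_ (Real.exp_pos _).le (Real.exp_pos _).le
        · apply Real.exp_le_exp.mpr
          have hub' : t ≤ R + 1 := by linarith [hTabs.2, habs'.2]
          have hlb' : -(R+1) ≤ t := by linarith [hTabs.1, habs'.1]
          have hsq' : t^2 ≤ (R+1)^2 := by nlinarith
          have hmulπ := mul_le_mul_of_nonneg_left hsq' pi_pos.le
          linarith
        · apply Real.exp_le_exp.mpr
          have hΦfac : (t - cT p)^3 - 3 * cV p * (t - cT p)^2
              = (t - cT p)^2 * ((t - cT p) - 3 * cV p) := by ring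
          have hΦabs : |(t - cT p)^3 - 3 * cV p * (t - cT p)^2| ≤ δ^2 * (1+3*R) := by
            rw [hΦfac, abs_mul]
            have e1 : |(t - cT p)^2| ≤ δ^2 := by
              rw [abs_of_nonneg (sq_nonneg _)]
              nlinarith [abs_nonneg (t - cT p)]
            have e2 : |(t - cT p) - 3 * cV p| ≤ 1 + 3*R := by
              calc |(t - cT p) - 3 * cV p| ≤ |t - cT p| + 3 * |cV p| := by
                    calc |(t - cT p) - 3 * cV p| ≤ |t - cT p| + |3 * cV p| := abs_sub _ _
                      _ = |t - cT p| + 3 * |cV p| := by rw [abs_mul]; norm_num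
                _ ≤ 1 + 3*R := by nlinarith
            exact mul_le_mul e1 e2 (abs_nonneg _) (by positivity)
          have hδΛ : δ^2 * (1+3*R) = 1/Λ := by
            rw [hδsq]
            field_simp
          have hfin : |Λ * ((t - cT p)^3 - 3 * cV p * (t - cT p)^2)| ≤ 1 := by
            rw [abs_mul, abs_of_pos hΛ0]
            calc Λ * |(t - cT p)^3 - 3 * cV p * (t - cT p)^2| ≤ Λ * (δ^2 * (1+3*R)) := by
                  apply mul_le_mul_of_nonneg_left hΦabs hΛ0.le
              _ = Λ * (1/Λ) := by rw [hδΛ]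
              _ = 1 := by field_simp
          have hsq : (Λ * ((t - cT p)^3 - 3 * cV p * (t - cT p)^2))^2 ≤ 1 := by
            nlinarith [sq_abs (Λ * ((t - cT p)^3 - 3 * cV p * (t - cT p)^2)),
              abs_nonneg (Λ * ((t - cT p)^3 - 3 * cV p * (t - cT p)^2))]
          nlinarith [pi_pos]
      calc 2*δ*c1 = c1 * (volume (Icc (cT p - δ) (cT p + δ))).toReal := by rw [hvol]; ring
        _ ≤ ∫ t in Icc (cT p - δ) (cT p + δ), GR (t, p) :=
            setIntegral_ge_of_const_le_real measurableSet_Icc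
              (by rw [Real.volume_Icc]; exact ENNReal.ofReal_ne_top) hconst hint_t.integrableOn
        _ ≤ ∫ t, GR (t, p) :=
            setIntegral_le_integral hint_t (ae_of_all _ fun t => (hGRpos _).le)
    have hIT_int : Integrable (fun p => ∫ t, GR (t, p)) μ := hGR_int.integral_prod_right
    have hDrlow : c2 * Λ ^ (-(1/2:ℝ)) ≤ Dr := by
      have hsqrtΛ : Real.sqrt (1/Λ) = Λ ^ (-(1/2:ℝ)) := by
        rw [Real.rpow_neg hΛ0.le, one_div, Real.sqrt_eq_rpow, Real.inv_rpow hΛ0.le]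
      have hstep : c2 * Λ ^ (-(1/2:ℝ)) = (2*δ*c1) * m := by
        rw [hc2, hδ, show 1/(Λ*(1+3*R)) = (1/Λ) * (1/(1+3*R)) by rw [one_div, one_div, one_div, mul_inv],
          Real.sqrt_mul (by positivity), hsqrtΛ]
        ring
      rw [hstep, hDr, integral_prod_symm GR hGR_int]
      calc (2*δ*c1) * m ≤ ∫ p in G N, (∫ t, GR (t, p)) ∂μ :=
            setIntegral_ge_of_const_le_real (hGmeas N) (measure_ne_top μ _) hinner
              hIT_int.integrableOn
        _ ≤ ∫ p, (∫ t, GR (t, p)) ∂μ :=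
            setIntegral_le_integral hIT_int
              (ae_of_all _ fun p => integral_nonneg fun t => (hGRpos _).le)
    have habsD : ‖D‖ = |Dr| := by rw [hrepr, Complex.norm_real, Real.norm_eq_abs]
    have h1 : Dr ≤ K * Λ ^ (-(β/2)) := by
      calc Dr ≤ |Dr| := le_abs_self _
        _ = ‖D‖ := habsD.symm
        _ ≤ K * Λ ^ (-(β/2)) := hub
    linarith
  -- conclude
  have key2 : ∀ Λ : ℝ, 1 ≤ Λ → c2 ≤ K * Λ ^ (-((β-1)/2)) := by
    intro Λ hΛ
    have hΛ0 : (0:ℝ) < Λ := lt_of_lt_of_le one_pos hΛ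
    have h := key Λ hΛ
    have hmul : Λ ^ (-(β/2)) * Λ ^ ((1:ℝ)/2) = Λ ^ (-((β-1)/2)) := by
      rw [← Real.rpow_add hΛ0]
      congr 1
      ring
    have hpow : Λ ^ (-(1/2:ℝ)) * Λ ^ ((1:ℝ)/2) = 1 := by
      rw [← Real.rpow_add hΛ0]
      norm_num
    have hp2 : (0:ℝ) < Λ ^ ((1:ℝ)/2) := Real.rpow_pos_of_pos hΛ0 _
    calc c2 = c2 * (Λ ^ (-(1/2:ℝ)) * Λ ^ ((1:ℝ)/2)) := by rw [hpow, mul_one]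
      _ = (c2 * Λ ^ (-(1/2:ℝ))) * Λ ^ ((1:ℝ)/2) := by ring
      _ ≤ (K * Λ ^ (-(β/2))) * Λ ^ ((1:ℝ)/2) := mul_le_mul_of_nonneg_right h hp2.le
      _ = K * (Λ ^ (-(β/2)) * Λ ^ ((1:ℝ)/2)) := by ring
      _ = K * Λ ^ (-((β-1)/2)) := by rw [hmul]
  have htend : Filter.Tendsto (fun Λ : ℝ => K * Λ ^ (-((β-1)/2))) Filter.atTop (nhds 0) := by
    have h := (tendsto_rpow_neg_atTop (by linarith : (0:ℝ) < (β-1)/2)).const_mul K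
    simpa using h
  have hev : ∀ᶠ Λ : ℝ in Filter.atTop, K * Λ ^ (-((β-1)/2)) < c2 :=
    htend.eventually (gt_mem_nhds hc2pos)
  obtain ⟨Λ, hΛlt, hΛ1⟩ := (hev.and (Filter.eventually_ge_atTop 1)).exists
  exact absurd (key2 Λ hΛ1) (not_le.mpr hΛlt)

end TS

/-- The tangent surface `S = {γ(t) + v γ'(t) : t ∈ ℝ, v ≠ 0}` of the helix
`γ(t) = (t, t², t³)` has Fourier dimension at most `1`. -/
theorem statement3
    (S : Set (EuclideanSpace ℝ (Fin 3)))
    (hS : S = {x : EuclideanSpace ℝ (Fin 3) | ∃ t v : ℝ, v ≠ 0 ∧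
      x = pt3 (t + v) (t ^ 2 + 2 * t * v) (t ^ 3 + 3 * t ^ 2 * v)}) :
    fourierDim S ≤ 1 := by
  unfold fourierDim
  apply Real.sSup_le ?_ zero_le_one
  rintro s ⟨hs0, -, μ, hfin, hμ0, hμS, C, hC⟩
  by_contra hgt
  push_neg at hgt
  haveI := hfin
  set M : ℝ := (μ univ).toReal with hM
  set β : ℝ := min s (3/2) with hβ
  have hβ1 : 1 < β := lt_min hgt (by norm_num)
  have hβ2 : β ≤ 3/2 := min_le_right _ _
  have hβs : β ≤ s := min_le_left _ _
  have haeS : ∀ᵐ p ∂μ, ∃ t v : ℝ, v ≠ 0 ∧ p 0 = t + v ∧ p 1 = t^2 + 2*t*v ∧ p 2 = t^3 + 3*t^2*v := by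
    rw [MeasureTheory.ae_iff]
    apply measure_mono_null ?_ hμS
    intro p hp
    simp only [mem_setOf_eq] at hp
    intro hpS
    rw [hS] at hpS
    obtain ⟨t, v, hv, hpt⟩ := hpS
    exact hp ⟨t, v, hv, by rw [hpt]; exact rfl, by rw [hpt]; exact rfl, by rw [hpt]; exact rfl⟩
  have hC0 : 0 ≤ C := by
    have h := hC 0
    rwa [norm_zero, Real.zero_rpow (by positivity : s/2 ≠ 0), zero_mul] at h
  have hC' : ∀ ξ : EuclideanSpace ℝ (Fin 3), ξ ≠ 0 →
      ‖mft μ ξ‖ ≤ (max C M) * ‖ξ‖ ^ (-(β/2)) := by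
    intro ξ hξ
    have hn : 0 < ‖ξ‖ := norm_pos_iff.mpr hξ
    rcases le_or_gt 1 ‖ξ‖ with h1 | h1
    · have h2 := hC ξ
      have hx : 0 < ‖ξ‖ ^ (s/2) := Real.rpow_pos_of_pos hn _
      have h3 : ‖mft μ ξ‖ ≤ C * ‖ξ‖ ^ (-(s/2)) := by
        rw [Real.rpow_neg hn.le, mul_comm C, ← div_eq_inv_mul]
        rw [le_div_iff₀ hx, mul_comm]
        exact h2
      calc ‖mft μ ξ‖ ≤ C * ‖ξ‖ ^ (-(s/2)) := h3
        _ ≤ C * ‖ξ‖ ^ (-(β/2)) :=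
            mul_le_mul_of_nonneg_left
              (Real.rpow_le_rpow_of_exponent_le h1 (by linarith)) hC0
        _ ≤ max C M * ‖ξ‖ ^ (-(β/2)) :=
            mul_le_mul_of_nonneg_right (le_max_left _ _) (Real.rpow_nonneg hn.le _)
    · calc ‖mft μ ξ‖ ≤ M := TS.mft_abs_le μ ξ
        _ = M * 1 := (mul_one M).symm
        _ ≤ M * ‖ξ‖ ^ (-(β/2)) := by
            apply mul_le_mul_of_nonneg_left
              (Real.one_le_rpow_of_pos_of_le_one_of_nonpos hn h1.le (by linarith))
            rw [hM]; exact ENNReal.toReal_nonneg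
        _ ≤ max C M * ‖ξ‖ ^ (-(β/2)) :=
            mul_le_mul_of_nonneg_right (le_max_right _ _) (Real.rpow_nonneg hn.le _)
  exact TS.main μ hμ0 haeS β (max C M) hβ1 hβ2 hC'
end

section
/- With the notation of the context (tangent surface of the helix γ(t) = (t,t²,t³) and the averaged measure ν built from a measure μ with Fourier decay exponent β/2), there is a constant C' > 0 such that |ν̂(ρ e₃)| ≤ C' ρ^{−β/2} for all ρ > 0, where e₃ = (0,0,1). In fact one may take C' = C‖ψ‖_{L¹}. -/
open MeasureTheory Real Set

lemma pt3_continuous {α : Type*} [TopologicalSpace α] {f g h : α → ℝ}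
    (hf : Continuous f) (hg : Continuous g) (hh : Continuous h) :
    Continuous fun p => pt3 (f p) (g p) (h p) := by
  unfold pt3
  refine ((EuclideanSpace.equiv (Fin 3) ℝ).symm.continuous).comp (continuous_pi fun i => ?_)
  fin_cases i <;> simpa

lemma pt3_norm_ge (x y z : ℝ) : z ≤ ‖pt3 x y z‖ := by
  rw [EuclideanSpace.norm_eq]
  apply Real.le_sqrt_of_sq_le
  simp only [Fin.sum_univ_three]
  simp [pt3, sq_abs]
  nlinarith [sq_nonneg x, sq_nonneg y]

lemma pt3_ne_zero (x y z : ℝ) (hz : z ≠ 0) : pt3 x y z ≠ 0 := by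
  intro h
  have := congrFun (congrArg (fun (w : EuclideanSpace ℝ (Fin 3)) => (w : Fin 3 → ℝ)) h) 2
  simp [pt3] at this
  exact hz this

set_option maxHeartbeats 1000000 in
/-- Upper Fourier decay of the averaged measure `ν` on the tangent surface of the helix
`γ(t) = (t,t²,t³)` in the direction `e₃`: `|ν̂(ρe₃)| ≤ C‖ψ‖_{L¹} ρ^{−β/2}`. -/
theorem statement4 (a b c : ℝ) (ha : 0 < a) (hab : a < b) (hc : 0 < c) (h2c : 2 * c < a)
    (lam : Measure (ℝ × ℝ)) (hlamfin : IsFiniteMeasure lam) (hlamne : lam ≠ 0)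
    (hlamsupp : lam ((Set.Icc (-c) c ×ˢ Set.Icc a b)ᶜ) = 0)
    (Φ : ℝ → ℝ → EuclideanSpace ℝ (Fin 3))
    (hΦ : ∀ t v, Φ t v = pt3 (t + v) (t ^ 2 + 2 * t * v) (t ^ 3 + 3 * t ^ 2 * v))
    (C β : ℝ) (hC : 0 < C) (hβ : 0 < β)
    (hdecay : ∀ ξ : EuclideanSpace ℝ (Fin 3), ξ ≠ 0 →
      ‖mft (lam.map fun p : ℝ × ℝ => Φ p.1 p.2) ξ‖ ≤ C * ‖ξ‖ ^ (-(β / 2)))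
    (ψ : ℝ → ℝ) (hψsm : ContDiff ℝ (⊤ : ℕ∞) ψ) (hψcs : HasCompactSupport ψ)
    (hψnn : ∀ s, 0 ≤ ψ s) (hψ1 : ∀ s : ℝ, |s| ≤ c → ψ s = 1)
    (hψ0 : ∀ s : ℝ, 2 * c ≤ |s| → ψ s = 0)
    (ν : Measure (EuclideanSpace ℝ (Fin 3))) (hνfin : IsFiniteMeasure ν)
    (hν : ∀ f : EuclideanSpace ℝ (Fin 3) → ℂ, Measurable f →
      (∃ B : ℝ, ∀ x, ‖f x‖ ≤ B) →
      ∫ x, f x ∂ν = ∫ s : ℝ, (∫ p : ℝ × ℝ, f (Φ (p.1 - s) p.2) ∂lam) * ((ψ s : ℝ) : ℂ)) :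
    ∀ ρ : ℝ, 0 < ρ →
      ‖mft ν (ρ • (EuclideanSpace.single (2 : Fin 3) 1))‖
        ≤ (C * ∫ s : ℝ, ψ s) * ρ ^ (-(β / 2)) := by
  intro ρ hρ
  set ξ : EuclideanSpace ℝ (Fin 3) := ρ • (EuclideanSpace.single (2 : Fin 3) 1) with hξ
  set f : EuclideanSpace ℝ (Fin 3) → ℂ :=
    fun x => Complex.exp (((-2 * Real.pi * inner ℝ x ξ : ℝ) : ℂ) * Complex.I) with hf
  -- basic facts about f
  have hcontf : Continuous f := by
    apply Complex.continuous_exp.comp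
    exact (Complex.continuous_ofReal.comp
      (continuous_const.mul (continuous_id.inner continuous_const))).mul continuous_const
  have hbd : ∀ x, ‖f x‖ ≤ 1 := by
    intro x; rw [hf]; simp [Complex.norm_exp]
  have key : ∫ x, f x ∂ν = ∫ s : ℝ, (∫ p : ℝ × ℝ, f (Φ (p.1 - s) p.2) ∂lam) * ((ψ s : ℝ) : ℂ) :=
    hν f hcontf.measurable ⟨1, hbd⟩
  -- inner product with ξ picks out the third coordinate
  have hinner1 : ∀ x : EuclideanSpace ℝ (Fin 3), (inner ℝ x ξ : ℝ) = ρ * x 2 := by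
    intro x
    simp [hξ, PiLp.inner_apply, Fin.sum_univ_three, EuclideanSpace.single_apply]
  -- continuity of the parametrization
  have hFcont : Continuous fun p : ℝ × ℝ => Φ p.1 p.2 := by
    have : (fun p : ℝ × ℝ => Φ p.1 p.2) = fun p : ℝ × ℝ =>
        pt3 (p.1 + p.2) (p.1 ^ 2 + 2 * p.1 * p.2) (p.1 ^ 3 + 3 * p.1 ^ 2 * p.2) := by
      funext p; exact hΦ p.1 p.2
    rw [this]
    exact pt3_continuous (continuous_fst.add continuous_snd)
      ((continuous_fst.pow 2).add ((continuous_const.mul continuous_fst).mul continuous_snd))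
      ((continuous_fst.pow 3).add
        ((continuous_const.mul (continuous_fst.pow 2)).mul continuous_snd))
  -- the crucial pointwise bound for the inner integral
  have hB : ∀ s : ℝ, ‖∫ p : ℝ × ℝ, f (Φ (p.1 - s) p.2) ∂lam‖
      ≤ C * ρ ^ (-(β / 2)) := by
    intro s
    set ξs : EuclideanSpace ℝ (Fin 3) := pt3 (3 * ρ * s ^ 2) (-(3 * ρ * s)) ρ with hξs
    have hne : ξs ≠ 0 := pt3_ne_zero _ _ _ (ne_of_gt hρ)
    have hnorm : ρ ≤ ‖ξs‖ := pt3_norm_ge _ _ _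
    have hinner2 : ∀ t v : ℝ, (inner ℝ (Φ t v) ξs : ℝ)
        = (t + v) * (3 * ρ * s ^ 2) + (t ^ 2 + 2 * t * v) * (-(3 * ρ * s))
          + (t ^ 3 + 3 * t ^ 2 * v) * ρ := by
      intro t v
      rw [hΦ]
      simp [hξs, PiLp.inner_apply, Fin.sum_univ_three, pt3]
      ring
    have hg : ∀ p : ℝ × ℝ, f (Φ (p.1 - s) p.2)
        = Complex.exp (((2 * Real.pi * (ρ * s ^ 3) : ℝ) : ℂ) * Complex.I)
          * Complex.exp (((-2 * Real.pi * inner ℝ (Φ p.1 p.2) ξs : ℝ) : ℂ) * Complex.I) := by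
      intro p
      have hr : (-2 * Real.pi * inner ℝ (Φ (p.1 - s) p.2) ξ : ℝ)
          = (2 * Real.pi * (ρ * s ^ 3)) + (-2 * Real.pi * inner ℝ (Φ p.1 p.2) ξs : ℝ) := by
        rw [hinner1, hinner2, hΦ]
        have h2 : (pt3 ((p.1 - s) + p.2) ((p.1 - s) ^ 2 + 2 * (p.1 - s) * p.2)
            ((p.1 - s) ^ 3 + 3 * (p.1 - s) ^ 2 * p.2)) 2
            = (p.1 - s) ^ 3 + 3 * (p.1 - s) ^ 2 * p.2 := by simp [pt3]
        rw [h2]; ring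
      simp only [hf]
      rw [hr, Complex.ofReal_add, add_mul, Complex.exp_add]
    have hmap : (∫ p : ℝ × ℝ,
        Complex.exp (((-2 * Real.pi * inner ℝ (Φ p.1 p.2) ξs : ℝ) : ℂ) * Complex.I) ∂lam)
        = mft (lam.map fun p : ℝ × ℝ => Φ p.1 p.2) ξs := by
      rw [mft, integral_map hFcont.measurable.aemeasurable]
      have : Continuous fun x : EuclideanSpace ℝ (Fin 3) =>
          Complex.exp (((-2 * Real.pi * inner ℝ x ξs : ℝ) : ℂ) * Complex.I) := by
        apply Complex.continuous_exp.comp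
        exact (Complex.continuous_ofReal.comp
          (continuous_const.mul (continuous_id.inner continuous_const))).mul continuous_const
      exact this.aestronglyMeasurable
    calc ‖∫ p : ℝ × ℝ, f (Φ (p.1 - s) p.2) ∂lam‖
        = ‖Complex.exp (((2 * Real.pi * (ρ * s ^ 3) : ℝ) : ℂ) * Complex.I)
          * ∫ p : ℝ × ℝ,
            Complex.exp (((-2 * Real.pi * inner ℝ (Φ p.1 p.2) ξs : ℝ) : ℂ) * Complex.I) ∂lam‖ := by
          rw [← integral_const_mul]
          congr 1
          exact integral_congr_ae (Filter.Eventually.of_forall hg)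
      _ = ‖mft (lam.map fun p : ℝ × ℝ => Φ p.1 p.2) ξs‖ := by
          rw [norm_mul, hmap]
          simp [Complex.norm_exp, ← Complex.ofReal_pow]
      _ ≤ C * ‖ξs‖ ^ (-(β / 2)) := hdecay ξs hne
      _ ≤ C * ρ ^ (-(β / 2)) := by
          apply mul_le_mul_of_nonneg_left _ hC.le
          exact Real.rpow_le_rpow_of_nonpos hρ hnorm (by linarith)
  -- assemble
  have hψint : Integrable ψ := hψsm.continuous.integrable_of_hasCompactSupport hψcs
  have hmft : mft ν ξ = ∫ x, f x ∂ν := rfl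
  calc ‖mft ν ξ‖
      = ‖∫ s : ℝ, (∫ p : ℝ × ℝ, f (Φ (p.1 - s) p.2) ∂lam) * ((ψ s : ℝ) : ℂ)‖ := by
        rw [hmft, key]
    _ ≤ ∫ s : ℝ, ‖(∫ p : ℝ × ℝ, f (Φ (p.1 - s) p.2) ∂lam) * ((ψ s : ℝ) : ℂ)‖ :=
        norm_integral_le_integral_norm _
    _ ≤ ∫ s : ℝ, (C * ρ ^ (-(β / 2))) * ψ s := by
        apply integral_mono_of_nonneg (Filter.Eventually.of_forall fun s => norm_nonneg _)
          (hψint.const_mul _)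
        apply Filter.Eventually.of_forall
        intro s
        dsimp only
        rw [norm_mul, Complex.norm_real, Real.norm_eq_abs, abs_of_nonneg (hψnn s)]
        exact mul_le_mul_of_nonneg_right (hB s) (hψnn s)
    _ = (C * ∫ s : ℝ, ψ s) * ρ ^ (-(β / 2)) := by
        rw [integral_const_mul]; ring
end

section
/- Let c > 0, I = [−2c, 2c], 0 < a < b, let α(t) = (t, t²+t⁴, t³), and let S = { α(t) + v α'(t) : t ∈ I, a < v < b } ⊆ ℝ³ be the tangent surface generated by the perturbed helix α. Then dim_F(S) ≤ 1; equivalently, if μ is a nonzero finite Borel measure supported on S and β > 0 satisfies sup_{ξ∈ℝ³} |ξ|^{β/2}|μ̂(ξ)| < ∞, then β ≤ 1. -/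
open MeasureTheory Real Set

open scoped RealInnerProductSpace

abbrev E3 := EuclideanSpace ℝ (Fin 3)


lemma int_fI {r B : ℝ} (hr : -1 < r) (hB : 0 < B) :
    Integrable (fun u : ℝ => |u| ^ r * Real.exp (-B * u ^ 2)) := by
  have h1 : IntegrableOn (fun u : ℝ => |u| ^ r * Real.exp (-B * u ^ 2)) (Ioi 0) :=
    (integrableOn_rpow_mul_exp_neg_mul_sq hB hr).congr_fun
      (fun x hx => by rw [abs_of_pos hx]) measurableSet_Ioi
  rw [← integrableOn_univ, ← @Iio_union_Ici _ _ (0 : ℝ), integrableOn_union,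
    integrableOn_Ici_iff_integrableOn_Ioi]
  refine ⟨?_, h1⟩
  rw [← (Measure.measurePreserving_neg (volume : Measure ℝ)).integrableOn_comp_preimage
      (Homeomorph.neg ℝ).measurableEmbedding]
  simp only [Function.comp_def, neg_preimage, neg_Iio, neg_neg, neg_zero, abs_neg, neg_sq]
  exact h1

lemma gauss_id {δ : ℝ} (hδ : 0 < δ) (u : ℝ) :
    ((Real.exp (-(u / δ) ^ 2) : ℝ) : ℂ) =
      ((Real.sqrt π * δ : ℝ) : ℂ) *
        ∫ lam : ℝ, Complex.exp (Complex.I * ((2 * π * u : ℝ) : ℂ) * lam) *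
          Complex.exp (-((π ^ 2 * δ ^ 2 : ℝ) : ℂ) * lam ^ 2) := by
  have hπ : (0:ℝ) < π := pi_pos
  have hb : (0:ℝ) < ((π ^ 2 * δ ^ 2 : ℝ) : ℂ).re := by
    simp only [Complex.ofReal_re]; positivity
  rw [fourierIntegral_gaussian hb ((2 * π * u : ℝ) : ℂ)]
  have hπc : ((π:ℝ):ℂ) ≠ 0 := by exact_mod_cast hπ.ne'
  have hδc : ((δ:ℝ):ℂ) ≠ 0 := by exact_mod_cast hδ.ne'
  have h1 : ((π : ℝ) : ℂ) / ((π ^ 2 * δ ^ 2 : ℝ) : ℂ) = (((π * δ ^ 2)⁻¹ : ℝ) : ℂ) := by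
    rw [div_eq_iff (by exact_mod_cast (by positivity : (π ^ 2 * δ ^ 2 : ℝ) ≠ 0))]
    push_cast
    field_simp
  have h2 : ((((π * δ ^ 2)⁻¹ : ℝ) : ℂ)) ^ (1 / 2 : ℂ) = (((Real.sqrt π * δ)⁻¹ : ℝ) : ℂ) := by
    rw [show (1/2 : ℂ) = ((1/2 : ℝ) : ℂ) by norm_num,
      ← Complex.ofReal_cpow (by positivity) (1/2 : ℝ)]
    congr 1
    rw [← Real.sqrt_eq_rpow, Real.sqrt_inv, Real.sqrt_mul (le_of_lt hπ), Real.sqrt_sq hδ.le]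
  have h3 : -((2 * π * u : ℝ) : ℂ) ^ 2 / (4 * ((π ^ 2 * δ ^ 2 : ℝ) : ℂ)) =
      ((-(u / δ) ^ 2 : ℝ) : ℂ) := by
    rw [div_eq_iff (by exact_mod_cast (by positivity : (4 * (π ^ 2 * δ ^ 2) : ℝ) ≠ 0))]
    push_cast
    field_simp
    ring
  rw [h1, h2, h3, ← Complex.ofReal_exp, ← Complex.ofReal_mul, ← Complex.ofReal_mul]
  congr 1
  have hne : Real.sqrt π * δ ≠ 0 := by positivity
  field_simp

/-- Sliced decay bound: the measure of a slab of half-width `δ` orthogonal to a unit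
vector `e` is at most `K δ^{s/2}`. -/
lemma slab_bound (μ : Measure E3) [IsFiniteMeasure μ] {s C : ℝ}
    (hs1 : 1 < s) (hs2 : s ≤ 3/2)
    (hdec : ∀ ξ : E3, ‖ξ‖ ^ (s/2) * ‖mft μ ξ‖ ≤ C) :
    ∃ K : ℝ, 0 ≤ K ∧ ∀ (e : E3), ‖e‖ = 1 → ∀ c₀ : ℝ, ∀ δ : ℝ, 0 < δ →
      (μ {x : E3 | abs (⟪x, e⟫ - c₀) ≤ δ}).toReal ≤ K * δ ^ (s/2) := by
  have hπ : (0:ℝ) < π := pi_pos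
  have hC : 0 ≤ C := by
    have h0 := hdec 0
    have : ‖(0:E3)‖ ^ (s/2) = 0 := by
      rw [norm_zero]; exact Real.zero_rpow (by positivity)
    calc (0:ℝ) ≤ ‖(0:E3)‖ ^ (s/2) * ‖mft μ 0‖ := by positivity
    _ ≤ C := h0
  have hr : (-1 : ℝ) < -(s/2) := by linarith
  have hfI : Integrable (fun u : ℝ => |u| ^ (-(s/2)) * Real.exp (-π^2 * u ^ 2)) :=
    int_fI hr (by positivity)
  set I₀ : ℝ := ∫ u : ℝ, |u| ^ (-(s/2)) * Real.exp (-π^2 * u ^ 2) with hI₀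
  have hI₀nn : 0 ≤ I₀ := integral_nonneg (fun u => by positivity)
  refine ⟨Real.exp 1 * (Real.sqrt π * C * I₀), by positivity, ?_⟩
  intro e he c₀ δ hδ
  set q : E3 → ℝ := fun x => ⟪x, e⟫ - c₀ with hq
  have hqc : Continuous q := by
    apply Continuous.sub _ continuous_const
    exact continuous_id.inner continuous_const
  set slab : Set E3 := {x : E3 | abs (⟪x, e⟫ - c₀) ≤ δ} with hslab
  have hmeas : MeasurableSet slab := by
    have : slab = q ⁻¹' (Icc (-δ) δ) := by
      ext x; simp [hslab, hq, abs_le, Set.mem_preimage]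
    rw [this]
    exact (hqc.measurable) measurableSet_Icc
  set w : E3 → ℝ := fun x => Real.exp (-(q x / δ) ^ 2) with hw
  have hwc : Continuous w := by
    apply Real.continuous_exp.comp
    exact (hqc.div_const δ).pow 2 |>.neg
  have hw1 : ∀ x, w x ≤ 1 := fun x =>
    Real.exp_le_one_iff.mpr (neg_nonpos.mpr (sq_nonneg _))
  have hwint : Integrable w μ :=
    (integrable_const (1:ℝ)).mono' hwc.aestronglyMeasurable
      (Filter.Eventually.of_forall fun x => by
        rw [Real.norm_eq_abs, abs_of_pos (Real.exp_pos _)]; exact hw1 x)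
  set T : ℝ := ∫ x, w x ∂μ with hT
  have hTnn : 0 ≤ T := integral_nonneg fun x => (Real.exp_pos _).le
  -- lower bound for T
  have hlow : (μ slab).toReal * Real.exp (-1) ≤ T := by
    have h1 : ∫ _x in slab, Real.exp (-1) ∂μ ≤ ∫ x in slab, w x ∂μ := by
      refine setIntegral_mono_on (integrableOn_const (measure_ne_top μ slab))
        hwint.integrableOn hmeas ?_
      intro x hx
      apply Real.exp_le_exp.mpr
      have hxq : |q x| ≤ δ := hx
      have h2 : (q x / δ) ^ 2 ≤ 1 := by
        rw [div_pow, div_le_one (by positivity)]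
        calc (q x) ^ 2 = |q x| ^ 2 := (sq_abs _).symm
          _ ≤ δ ^ 2 := by gcongr
      linarith
    have h0 : ∫ _x in slab, Real.exp (-1) ∂μ = (μ slab).toReal * Real.exp (-1) := by
      rw [setIntegral_const, smul_eq_mul]; rfl
    rw [h0] at h1
    exact h1.trans (setIntegral_le_integral hwint
      (Filter.Eventually.of_forall fun x => (Real.exp_pos _).le))
  -- Fourier side
  set bC : ℂ := ((π ^ 2 * δ ^ 2 : ℝ) : ℂ) with hbC
  set F : E3 → ℝ → ℂ := fun x lam =>
    Complex.exp (Complex.I * ((2 * π * q x : ℝ) : ℂ) * lam) *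
      Complex.exp (-bC * lam ^ 2) with hF
  have hFnorm : ∀ x lam, ‖F x lam‖ = Real.exp (-(π ^ 2 * δ ^ 2) * lam ^ 2) := by
    intro x lam
    rw [hF]
    simp only [norm_mul, Complex.norm_exp]
    have h1 : (Complex.I * ((2 * π * q x : ℝ) : ℂ) * (lam:ℝ)).re = 0 := by
      simp [Complex.mul_re]
    have h2 : (-bC * (lam:ℝ) ^ 2).re = -(π ^ 2 * δ ^ 2) * lam ^ 2 := by
      rw [hbC]
      have : (-((π ^ 2 * δ ^ 2 : ℝ) : ℂ) * (lam:ℝ) ^ 2) = (((-(π ^ 2 * δ ^ 2) * lam ^ 2 : ℝ)) : ℂ) := by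
        push_cast; ring
      rw [this, Complex.ofReal_re]
    rw [h1, h2, Real.exp_zero, one_mul]
  have hFcont : Continuous (Function.uncurry F) := by
    rw [hF]
    apply Continuous.mul
    · apply Complex.continuous_exp.comp
      apply Continuous.mul
      · apply Continuous.mul continuous_const
        exact Complex.continuous_ofReal.comp
          ((continuous_const.mul (hqc.comp continuous_fst)))
      · exact Complex.continuous_ofReal.comp continuous_snd
    · apply Complex.continuous_exp.comp
      exact (continuous_const.mul ((Complex.continuous_ofReal.comp continuous_snd).pow 2))
  have hFint : Integrable (Function.uncurry F) (μ.prod volume) := by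
    have hg : Integrable (fun u : ℝ => Real.exp (-(π ^ 2 * δ ^ 2) * u ^ 2)) :=
      integrable_exp_neg_mul_sq (by positivity)
    have hbd : Integrable (fun z : E3 × ℝ =>
        (1:ℝ) * Real.exp (-(π ^ 2 * δ ^ 2) * z.2 ^ 2)) (μ.prod volume) :=
      (integrable_const (1:ℝ)).mul_prod hg
    refine hbd.mono' hFcont.aestronglyMeasurable ?_
    refine Filter.Eventually.of_forall fun z => ?_
    show ‖F z.1 z.2‖ ≤ _
    rw [hFnorm z.1 z.2, one_mul]
  have hmftform : ∀ lam : ℝ, (∫ x, F x lam ∂μ) =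
      Complex.exp (-bC * lam ^ 2) *
        (Complex.exp (Complex.I * ((2 * π * (-c₀) : ℝ) : ℂ) * lam) * mft μ ((-lam) • e)) := by
    intro lam
    have hptw : ∀ x : E3, F x lam =
        Complex.exp (-bC * lam ^ 2) * (Complex.exp (Complex.I * ((2 * π * (-c₀) : ℝ) : ℂ) * lam) *
          Complex.exp (((-2 * Real.pi * (inner ℝ x ((-lam) • e) : ℝ) : ℝ) : ℂ) * Complex.I)) := by
      intro x
      rw [hF]
      simp only []
      rw [← Complex.exp_add, ← Complex.exp_add, ← Complex.exp_add]
      congr 1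
      have hin : (inner ℝ x ((-lam) • e) : ℝ) = -lam * ⟪x, e⟫ := real_inner_smul_right x e (-lam)
      rw [hin, hq]
      push_cast
      ring
    rw [show (fun x => F x lam) = fun x =>
        Complex.exp (-bC * lam ^ 2) * (Complex.exp (Complex.I * ((2 * π * (-c₀) : ℝ) : ℂ) * lam) *
          Complex.exp (((-2 * Real.pi * (inner ℝ x ((-lam) • e) : ℝ) : ℝ) : ℂ) * Complex.I))
      from funext hptw]
    rw [integral_const_mul, integral_const_mul]
    rfl
  have hiden : ((T : ℝ) : ℂ) = ((Real.sqrt π * δ : ℝ) : ℂ) *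
      ∫ lam : ℝ, Complex.exp (-bC * lam ^ 2) *
        (Complex.exp (Complex.I * ((2 * π * (-c₀) : ℝ) : ℂ) * lam) * mft μ ((-lam) • e)) := by
    calc ((T : ℝ) : ℂ) = ∫ x, ((w x : ℝ) : ℂ) ∂μ := integral_ofReal.symm
      _ = ∫ x, (((Real.sqrt π * δ : ℝ) : ℂ) * ∫ lam : ℝ, F x lam) ∂μ := by
          congr 1
          funext x
          rw [hw]
          exact gauss_id hδ (q x)
      _ = ((Real.sqrt π * δ : ℝ) : ℂ) * ∫ x, (∫ lam : ℝ, F x lam) ∂μ := integral_const_mul _ _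
      _ = ((Real.sqrt π * δ : ℝ) : ℂ) * ∫ lam : ℝ, (∫ x, F x lam ∂μ) := by
          rw [integral_integral_swap hFint]
      _ = _ := by rw [funext hmftform]
  -- bound the lam-integral
  set fI : ℝ → ℝ := fun u => |u| ^ (-(s/2)) * Real.exp (-π ^ 2 * u ^ 2) with hfIdef
  set gbd : ℝ → ℝ := fun lam => (C * δ ^ (s/2)) * fI (δ * lam) with hgbd
  have hgint : Integrable gbd := (hfI.comp_mul_left' hδ.ne').const_mul _
  have hae : ∀ᵐ lam : ℝ, lam ≠ (0:ℝ) := by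
    have : ({(0:ℝ)} : Set ℝ)ᶜ ∈ ae (volume : Measure ℝ) :=
      compl_mem_ae_iff.mpr (measure_singleton 0)
    filter_upwards [this] with lam hlam
    simpa using hlam
  have hgb : ∀ lam : ℝ, lam ≠ 0 → ‖Complex.exp (-bC * lam ^ 2) *
      (Complex.exp (Complex.I * ((2 * π * (-c₀) : ℝ) : ℂ) * lam) * mft μ ((-lam) • e))‖
      ≤ gbd lam := by
    intro lam hlam
    have habs : (0:ℝ) < |lam| := abs_pos.mpr hlam
    have hnorm1 : ‖Complex.exp (-bC * (lam:ℝ) ^ 2)‖ = Real.exp (-(π ^ 2 * δ ^ 2) * lam ^ 2) := by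
      have := hFnorm 0 lam
      rw [hF] at this
      simp only [norm_mul] at this ⊢
      rw [Complex.norm_exp, Complex.norm_exp] at this
      rw [Complex.norm_exp]
      have h1 : (Complex.I * ((2 * π * q 0 : ℝ) : ℂ) * (lam:ℝ)).re = 0 := by
        simp [Complex.mul_re]
      rw [h1, Real.exp_zero, one_mul] at this
      exact this
    have hmft : ‖mft μ ((-lam) • e)‖ ≤ C * |lam| ^ (-(s/2)) := by
      have hd := hdec ((-lam) • e)
      have hn : ‖(-lam) • e‖ = |lam| := by
        rw [norm_smul, he, mul_one, Real.norm_eq_abs, abs_neg]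
      rw [hn] at hd
      have hp : (0:ℝ) < |lam| ^ (s/2) := Real.rpow_pos_of_pos habs _
      rw [Real.rpow_neg (abs_nonneg _), ← div_eq_mul_inv, le_div_iff₀ hp, mul_comm]
      exact hd
    have hunit : ‖Complex.exp (Complex.I * ((2 * π * (-c₀) : ℝ) : ℂ) * (lam:ℝ))‖ = 1 := by
      rw [Complex.norm_exp]
      have : (Complex.I * ((2 * π * (-c₀) : ℝ) : ℂ) * (lam:ℝ)).re = 0 := by
        simp [Complex.mul_re]
      rw [this, Real.exp_zero]
    rw [norm_mul, norm_mul, hnorm1, hunit, one_mul]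
    have hgbd_eq : gbd lam = (C * |lam| ^ (-(s/2))) * Real.exp (-(π ^ 2 * δ ^ 2) * lam ^ 2) := by
      rw [hgbd, hfIdef]
      simp only []
      rw [abs_mul, abs_of_pos hδ]
      rw [Real.mul_rpow hδ.le (abs_nonneg _)]
      rw [Real.rpow_neg hδ.le]
      have hδp : (0:ℝ) < δ ^ (s/2) := Real.rpow_pos_of_pos hδ _
      field_simp
    rw [hgbd_eq, mul_comm (C * |lam| ^ (-(s/2)))]
    refine mul_le_mul_of_nonneg_left ?_ (Real.exp_pos _).le
    exact hmft
  have hintbound : ‖∫ lam : ℝ, Complex.exp (-bC * lam ^ 2) *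
      (Complex.exp (Complex.I * ((2 * π * (-c₀) : ℝ) : ℂ) * lam) * mft μ ((-lam) • e))‖
      ≤ ∫ lam : ℝ, gbd lam := by
    refine norm_integral_le_of_norm_le hgint ?_
    filter_upwards [hae] with lam hlam
    exact hgb lam hlam
  have hgval : ∫ lam : ℝ, gbd lam = (C * δ ^ (s/2)) * (δ⁻¹ * I₀) := by
    rw [hgbd]
    rw [integral_const_mul]
    congr 1
    have := MeasureTheory.Measure.integral_comp_mul_left fI δ
    rw [this, abs_inv, abs_of_pos hδ, smul_eq_mul]
  -- put everything together
  have hfinal : T ≤ Real.sqrt π * C * I₀ * δ ^ (s/2) := by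
    have h1 : T = ‖((T:ℝ):ℂ)‖ := by
      rw [Complex.norm_real, Real.norm_eq_abs, abs_of_nonneg hTnn]
    rw [h1, hiden, norm_mul]
    have h2 : ‖((Real.sqrt π * δ : ℝ) : ℂ)‖ = Real.sqrt π * δ := by
      rw [Complex.norm_real, Real.norm_eq_abs, abs_of_pos (by positivity)]
    rw [h2]
    calc Real.sqrt π * δ * ‖∫ lam : ℝ, Complex.exp (-bC * lam ^ 2) *
        (Complex.exp (Complex.I * ((2 * π * (-c₀) : ℝ) : ℂ) * lam) * mft μ ((-lam) • e))‖
        ≤ Real.sqrt π * δ * ((C * δ ^ (s/2)) * (δ⁻¹ * I₀)) := by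
          rw [← hgval]
          exact mul_le_mul_of_nonneg_left hintbound (by positivity)
      _ = Real.sqrt π * C * I₀ * δ ^ (s/2) * (δ * δ⁻¹) := by ring
      _ = Real.sqrt π * C * I₀ * δ ^ (s/2) := by rw [mul_inv_cancel₀ hδ.ne', mul_one]
  calc (μ slab).toReal = ((μ slab).toReal * Real.exp (-1)) * Real.exp 1 := by
        rw [mul_assoc, ← Real.exp_add]; simp
    _ ≤ T * Real.exp 1 := by
        have := Real.exp_pos 1
        nlinarith [hlow]
    _ ≤ (Real.sqrt π * C * I₀ * δ ^ (s/2)) * Real.exp 1 := by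
        have := Real.exp_pos 1
        nlinarith [hfinal]
    _ = Real.exp 1 * (Real.sqrt π * C * I₀) * δ ^ (s/2) := by ring



noncomputable def nv (t : ℝ) : E3 := pt3 (6*t^2 - 12*t^4) (-6*t) (2 + 12*t^2)
noncomputable def alph (t : ℝ) : E3 := pt3 t (t^2 + t^4) (t^3)

lemma inner_pt3 (x y z x' y' z' : ℝ) :
    ⟪pt3 x y z, pt3 x' y' z'⟫ = x*x' + y*y' + z*z' := by
  simp [pt3, PiLp.inner_apply, Fin.sum_univ_three, EuclideanSpace.equiv]; ring

lemma norm_nv_ge (t : ℝ) : 1 ≤ ‖nv t‖ := by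
  have h1 : ⟪nv t, nv t⟫ = (6*t^2 - 12*t^4)*(6*t^2 - 12*t^4) + (-6*t)*(-6*t)
      + (2 + 12*t^2)*(2 + 12*t^2) := inner_pt3 _ _ _ _ _ _
  have h2 : (4:ℝ) ≤ ⟪nv t, nv t⟫ := by rw [h1]; nlinarith [sq_nonneg t, sq_nonneg (t^2), sq_nonneg (6*t^2-12*t^4), sq_nonneg (6*t)]
  rw [real_inner_self_eq_norm_mul_norm] at h2
  nlinarith [norm_nonneg (nv t)]

lemma geom_bound {bb cc : ℝ} (hb : 0 < bb) (hc : 0 < cc) {t t₀ v : ℝ}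
    (ht : |t| ≤ 2*cc) (ht₀ : |t₀| ≤ 2*cc) (hv : |v| ≤ bb) (hh : |t - t₀| ≤ 1) :
    |⟪pt3 (t + v) (t ^ 2 + t ^ 4 + v * (2 * t + 4 * t ^ 3)) (t ^ 3 + v * (3 * t ^ 2)), nv t₀⟫
      - ⟪alph t₀, nv t₀⟫|
      ≤ ((6+144*cc^2)*bb + (2+48*cc*bb+48*cc^2) + 12*cc) * (t-t₀)^2 := by
  rw [show alph t₀ = pt3 t₀ (t₀^2 + t₀^4) (t₀^3) from rfl,
    show nv t₀ = pt3 (6*t₀^2 - 12*t₀^4) (-6*t₀) (2 + 12*t₀^2) from rfl,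
    inner_pt3, inner_pt3]
  have hid : (t + v)*(6*t₀^2 - 12*t₀^4) + (t ^ 2 + t ^ 4 + v * (2 * t + 4 * t ^ 3))*(-6*t₀)
        + (t ^ 3 + v * (3 * t ^ 2))*(2 + 12*t₀^2)
      - (t₀*(6*t₀^2 - 12*t₀^4) + (t₀^2 + t₀^4)*(-6*t₀) + t₀^3*(2 + 12*t₀^2))
      = ((6 - 36*t₀^2)*v + (t-t₀)*(2 - 24*t₀*v - 12*t₀^2) + (-(6*t₀))*(t-t₀)^2) * (t-t₀)^2 := by
    ring
  rw [hid, abs_mul, abs_of_nonneg (sq_nonneg (t-t₀))]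
  have hbt := abs_le.mp ht
  have hbt₀ := abs_le.mp ht₀
  have hbv := abs_le.mp hv
  have ht₀sq : t₀^2 ≤ 4*cc^2 := by nlinarith
  have ht₀v : |t₀*v| ≤ 2*cc*bb := by
    rw [abs_mul]; exact mul_le_mul ht₀ hv (abs_nonneg _) (by positivity)
  have hbt₀v := abs_le.mp ht₀v
  have hsq1 : (t-t₀)^2 ≤ 1 := by nlinarith [abs_le.mp hh, abs_nonneg (t-t₀)]
  have e1 : |(6 - 36*t₀^2)*v| ≤ (6+144*cc^2)*bb := by
    rw [abs_mul]
    refine mul_le_mul ?_ hv (abs_nonneg _) (by positivity)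
    rw [abs_le]; constructor <;> nlinarith
  have e2 : |(t-t₀)*(2 - 24*t₀*v - 12*t₀^2)| ≤ 2+48*cc*bb+48*cc^2 := by
    rw [abs_mul]
    calc |t-t₀| * |2 - 24*t₀*v - 12*t₀^2| ≤ 1 * (2+48*cc*bb+48*cc^2) := by
          refine mul_le_mul hh ?_ (abs_nonneg _) zero_le_one
          rw [abs_le]; constructor <;> nlinarith
      _ = 2+48*cc*bb+48*cc^2 := one_mul _
  have e3 : |(-(6*t₀))*(t-t₀)^2| ≤ 12*cc := by
    rw [abs_mul, abs_neg, abs_mul, abs_of_nonneg (sq_nonneg (t-t₀))]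
    have h6 : |(6:ℝ)| = 6 := by norm_num
    rw [h6]
    calc 6 * |t₀| * (t-t₀)^2 ≤ 6 * (2*cc) * 1 := by
          refine mul_le_mul (by nlinarith) hsq1 (sq_nonneg _) (by positivity)
      _ = 12*cc := by ring
  refine mul_le_mul_of_nonneg_right ?_ (sq_nonneg _)
  calc |(6 - 36*t₀^2)*v + (t-t₀)*(2 - 24*t₀*v - 12*t₀^2) + (-(6*t₀))*(t-t₀)^2|
      ≤ |(6 - 36*t₀^2)*v| + |(t-t₀)*(2 - 24*t₀*v - 12*t₀^2)| + |(-(6*t₀))*(t-t₀)^2| :=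
        abs_add_three _ _ _
    _ ≤ (6+144*cc^2)*bb + (2+48*cc*bb+48*cc^2) + 12*cc := by linarith


noncomputable def ev (t : ℝ) : E3 := ‖nv t‖⁻¹ • nv t

lemma norm_ev (t : ℝ) : ‖ev t‖ = 1 := by
  have h := norm_nv_ge t
  have hne : ‖nv t‖ ≠ 0 := by linarith
  rw [ev, norm_smul, norm_inv, norm_norm, inv_mul_cancel₀ hne]

set_option maxHeartbeats 2000000 in
lemma main_contra (aa bb cc : ℝ) (ha : 0 < aa) (hab : aa < bb) (hc : 0 < cc)
    (S : Set E3)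
    (hS : S = {x : E3 | ∃ t v : ℝ,
      t ∈ Set.Icc (-(2 * cc)) (2 * cc) ∧ v ∈ Set.Ioo aa bb ∧
      x = pt3 (t + v) (t ^ 2 + t ^ 4 + v * (2 * t + 4 * t ^ 3)) (t ^ 3 + v * (3 * t ^ 2))})
    (μ : Measure E3) [IsFiniteMeasure μ] (hμ0 : μ ≠ 0) (hμS : μ Sᶜ = 0)
    {s C : ℝ} (hs1 : 1 < s) (hs2 : s ≤ 3/2)
    (hdec : ∀ ξ : E3, ‖ξ‖ ^ (s/2) * ‖mft μ ξ‖ ≤ C) : False := by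
  have hb : 0 < bb := ha.trans hab
  obtain ⟨K, hK, hslab⟩ := slab_bound μ hs1 hs2 hdec
  set M : ℝ := (6+144*cc^2)*bb + (2+48*cc*bb+48*cc^2) + 12*cc with hM
  have hMpos : 0 < M := by positivity
  set P : ℝ := (μ univ).toReal with hP
  have hPpos : 0 < P := ENNReal.toReal_pos
    (Measure.measure_univ_ne_zero.mpr hμ0) (measure_ne_top μ univ)
  set A : ℝ := (4*cc+1) * K * M^(s/2) with hA
  have hAnn : 0 ≤ A := by positivity
  have key : ∀ δ : ℝ, 0 < δ → δ ≤ 1 → P ≤ A * δ^((s-1)/2) := by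
    intro δ hδ hδ1
    set σ : ℝ := Real.sqrt δ with hσ
    have hσpos : 0 < σ := Real.sqrt_pos.mpr hδ
    have hσ1 : σ ≤ 1 := by
      rw [hσ, show (1:ℝ) = Real.sqrt 1 by simp]
      exact Real.sqrt_le_sqrt hδ1
    set N : ℕ := Nat.floor (4*cc/σ) + 1 with hN
    set tj : ℕ → ℝ := fun j => -(2*cc) + j*σ with htj
    set Slab : ℕ → Set E3 :=
      fun j => {x : E3 | abs (⟪x, ev (tj j)⟫ - ⟪alph (tj j), ev (tj j)⟫) ≤ M*δ} with hSl
    have hcover : S ⊆ ⋃ j ∈ Finset.range N, Slab j := by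
      intro x hx
      rw [hS] at hx
      obtain ⟨t, v, htI, hvI, hxe⟩ := hx
      set j : ℕ := Nat.floor ((t + 2*cc)/σ) with hj
      have h1 : 0 ≤ (t + 2*cc)/σ := div_nonneg (by linarith [htI.1]) hσpos.le
      have h2 : (j:ℝ) ≤ (t + 2*cc)/σ := Nat.floor_le h1
      have h3 : (t + 2*cc)/σ < j + 1 := Nat.lt_floor_add_one _
      have hjN : j < N := by
        have hle : (t+2*cc)/σ ≤ 4*cc/σ := by
          gcongr
          linarith [htI.2]
        have hfl : j ≤ Nat.floor (4*cc/σ) := hj ▸ Nat.floor_mono hle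
        omega
      refine Set.mem_biUnion (Finset.mem_range.mpr hjN) ?_
      set t₀ : ℝ := tj j with ht₀d
      have hjσ1 : (j:ℝ)*σ ≤ t + 2*cc := (le_div_iff₀ hσpos).mp h2
      have hjσ2 : t + 2*cc < ((j:ℝ)+1)*σ := (div_lt_iff₀ hσpos).mp h3
      have hth : 0 ≤ t - t₀ := by rw [ht₀d, htj]; simp only []; linarith
      have hth2 : t - t₀ ≤ σ := by rw [ht₀d, htj]; simp only []; linarith
      have habs_t : |t| ≤ 2*cc := abs_le.mpr ⟨by linarith [htI.1], htI.2⟩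
      have habs_t₀ : |t₀| ≤ 2*cc := by
        rw [abs_le]; constructor
        · rw [ht₀d, htj]; simp only []; nlinarith [Nat.cast_nonneg (α := ℝ) j]
        · linarith [htI.2]
      have habs_v : |v| ≤ bb := abs_le.mpr ⟨by linarith [hvI.1], hvI.2.le⟩
      have hh1 : |t - t₀| ≤ 1 := by rw [abs_of_nonneg hth]; linarith
      have hsq : (t-t₀)^2 ≤ δ := by nlinarith [Real.sq_sqrt hδ.le]
      have hg := geom_bound hb hc habs_t habs_t₀ habs_v hh1
      show abs (⟪x, ev t₀⟫ - ⟪alph t₀, ev t₀⟫) ≤ M*δ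
      have hrw : ⟪x, ev t₀⟫ - ⟪alph t₀, ev t₀⟫
          = ‖nv t₀‖⁻¹ * (⟪x, nv t₀⟫ - ⟪alph t₀, nv t₀⟫) := by
        rw [ev, real_inner_smul_right, real_inner_smul_right]; ring
      rw [hrw, abs_mul]
      have hinv : |‖nv t₀‖⁻¹| ≤ 1 := by
        rw [abs_of_nonneg (inv_nonneg.mpr (norm_nonneg _))]
        exact inv_le_one_of_one_le₀ (norm_nv_ge t₀)
      calc |‖nv t₀‖⁻¹| * |⟪x, nv t₀⟫ - ⟪alph t₀, nv t₀⟫|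
          ≤ 1 * (M * (t-t₀)^2) := by
            refine mul_le_mul hinv ?_ (abs_nonneg _) zero_le_one
            rw [hxe]; exact hg
        _ ≤ M*δ := by rw [one_mul]; exact mul_le_mul_of_nonneg_left hsq hMpos.le
    have hμuniv : μ (univ : Set E3) ≤ ∑ j ∈ Finset.range N, μ (Slab j) := by
      calc μ univ = μ (S ∪ Sᶜ) := by rw [Set.union_compl_self]
        _ ≤ μ S + μ Sᶜ := measure_union_le _ _
        _ = μ S := by rw [hμS, add_zero]
        _ ≤ μ (⋃ j ∈ Finset.range N, Slab j) := measure_mono hcover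
        _ ≤ ∑ j ∈ Finset.range N, μ (Slab j) := measure_biUnion_finset_le _ _
    have hPle : P ≤ ∑ j ∈ Finset.range N, (μ (Slab j)).toReal := by
      have hne : ∀ j ∈ Finset.range N, μ (Slab j) ≠ ⊤ := fun j _ => measure_ne_top μ _
      have hlt : ∑ j ∈ Finset.range N, μ (Slab j) ≠ ⊤ :=
        (ENNReal.sum_lt_top.mpr fun j _ => measure_lt_top μ _).ne
      have := ENNReal.toReal_mono hlt hμuniv
      rwa [ENNReal.toReal_sum hne] at this
    have hsum : ∑ j ∈ Finset.range N, (μ (Slab j)).toReal ≤ (N:ℝ) * (K * (M*δ)^(s/2)) := by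
      calc ∑ j ∈ Finset.range N, (μ (Slab j)).toReal
          ≤ ∑ _j ∈ Finset.range N, K * (M*δ)^(s/2) :=
            Finset.sum_le_sum fun j _ => hslab (ev (tj j)) (norm_ev _) _ (M*δ) (by positivity)
        _ = (N:ℝ) * (K * (M*δ)^(s/2)) := by
            rw [Finset.sum_const, Finset.card_range, nsmul_eq_mul]
    have hNle : (N:ℝ) ≤ (4*cc+1)/σ := by
      have h1 : (Nat.floor (4*cc/σ) : ℝ) ≤ 4*cc/σ := Nat.floor_le (by positivity)
      have h2 : (1:ℝ) ≤ 1/σ := by rw [le_div_iff₀ hσpos]; linarith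
      have h3 : (4*cc+1)/σ = 4*cc/σ + 1/σ := by ring
      rw [hN, h3]
      push_cast
      linarith
    have hfin : P ≤ ((4*cc+1)/σ) * (K * (M*δ)^(s/2)) := by
      refine (hPle.trans hsum).trans ?_
      exact mul_le_mul_of_nonneg_right hNle (by positivity)
    have hrpow : ((4*cc+1)/σ) * (K * (M*δ)^(s/2)) = A * δ^((s-1)/2) := by
      have e1 : (M*δ)^(s/2) = M^(s/2) * δ^(s/2) := Real.mul_rpow hMpos.le hδ.le
      have e2 : δ^((s-1)/2) = δ^(s/2) / δ^((1:ℝ)/2) := by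
        rw [show (s-1)/2 = s/2 - (1:ℝ)/2 by ring, Real.rpow_sub hδ]
      have e3 : σ = δ^((1:ℝ)/2) := by rw [hσ, Real.sqrt_eq_rpow]
      have hx : δ^((1:ℝ)/2) ≠ 0 := ne_of_gt (Real.rpow_pos_of_pos hδ _)
      rw [e1, e2, e3, hA]
      field_simp
    rw [hrpow] at hfin
    exact hfin
  -- take δ → 0
  have htend : Filter.Tendsto (fun n : ℕ => A * ((1:ℝ)/(n+1))^((s-1)/2))
      Filter.atTop (nhds 0) := by
    have h1 : Filter.Tendsto (fun n : ℕ => (1:ℝ)/(n+1)) Filter.atTop (nhds 0) :=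
      tendsto_one_div_add_atTop_nhds_zero_nat
    have h2 := h1.rpow_const (p := (s-1)/2) (Or.inr (by linarith))
    rw [Real.zero_rpow (by intro h; nlinarith : (s-1)/2 ≠ 0)] at h2
    simpa using (tendsto_const_nhds (x := A)).mul h2
  obtain ⟨n, hn⟩ := (htend.eventually_lt_const hPpos).exists
  have hd1 : (0:ℝ) < 1/(n+1) := by positivity
  have hd2 : (1:ℝ)/(n+1) ≤ 1 := by
    rw [div_le_one (by positivity)]
    linarith [Nat.cast_nonneg (α := ℝ) n]
  linarith [key _ hd1 hd2]


lemma mft_bound {n : ℕ} (μ : Measure (EuclideanSpace ℝ (Fin n))) [IsFiniteMeasure μ]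
    (ξ : EuclideanSpace ℝ (Fin n)) : ‖mft μ ξ‖ ≤ (μ univ).toReal := by
  rw [mft]
  calc ‖∫ x, Complex.exp (((-2 * Real.pi * inner ℝ x ξ : ℝ) : ℂ) * Complex.I) ∂μ‖
      ≤ ∫ x, ‖Complex.exp (((-2 * Real.pi * inner ℝ x ξ : ℝ) : ℂ) * Complex.I)‖ ∂μ :=
        norm_integral_le_integral_norm _
    _ = ∫ _x, (1:ℝ) ∂μ := by
        congr 1; funext x
        rw [Complex.norm_exp]
        simp [Complex.mul_re]
    _ = (μ univ).toReal := by simp; rfl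


/-- The tangent surface `S = {α(t) + v α'(t) : t ∈ [−2c,2c], a < v < b}` of the perturbed
helix `α(t) = (t, t²+t⁴, t³)` (with `α'(t) = (1, 2t+4t³, 3t²)`) has Fourier dimension
at most `1`. -/
theorem statement6 (a b c : ℝ) (ha : 0 < a) (hab : a < b) (hc : 0 < c)
    (S : Set (EuclideanSpace ℝ (Fin 3)))
    (hS : S = {x : EuclideanSpace ℝ (Fin 3) | ∃ t v : ℝ,
      t ∈ Set.Icc (-(2 * c)) (2 * c) ∧ v ∈ Set.Ioo a b ∧
      x = pt3 (t + v) (t ^ 2 + t ^ 4 + v * (2 * t + 4 * t ^ 3)) (t ^ 3 + v * (3 * t ^ 2))}) :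
    fourierDim S ≤ 1 := by
  rw [fourierDim]
  refine Real.sSup_le ?_ zero_le_one
  rintro s ⟨hs0, hs3, μ, hfin, hμ0, hμS, C, hdec⟩
  by_contra hgt
  push_neg at hgt
  set s' := min s (3/2 : ℝ) with hs'
  have hs'1 : 1 < s' := lt_min hgt (by norm_num)
  have hs'2 : s' ≤ 3/2 := min_le_right _ _
  have hdec' : ∀ ξ : EuclideanSpace ℝ (Fin 3),
      ‖ξ‖ ^ (s'/2) * ‖mft μ ξ‖ ≤ max C (μ univ).toReal := by
    intro ξ
    rcases le_or_gt ‖ξ‖ 1 with h|h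
    · calc ‖ξ‖ ^ (s'/2) * ‖mft μ ξ‖
          ≤ 1 * (μ univ).toReal :=
            mul_le_mul (Real.rpow_le_one (norm_nonneg _) h (by positivity))
              (mft_bound μ ξ) (norm_nonneg _) zero_le_one
        _ ≤ max C (μ univ).toReal := by rw [one_mul]; exact le_max_right _ _
    · calc ‖ξ‖ ^ (s'/2) * ‖mft μ ξ‖
          ≤ ‖ξ‖ ^ (s/2) * ‖mft μ ξ‖ := by
            refine mul_le_mul_of_nonneg_right ?_ (norm_nonneg _)
            refine Real.rpow_le_rpow_of_exponent_le h.le ?_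
            have : s' ≤ s := min_le_left _ _
            linarith
        _ ≤ C := hdec ξ
        _ ≤ max C (μ univ).toReal := le_max_left _ _
  exact main_contra a b c ha hab hc S hS μ hμ0 hμS hs'1 hs'2 hdec'
end

section
/- With the notation of the context (constant-rank-k ruled parametrization Φ with unit normal field N), fix (u,v) ∈ U×V and define φ : ℝ^k → ℝ by φ(s) = (Φ(u,v) − α(s))·N(s). Then s = u is a critical point of φ (i.e. ∇φ(u) = 0), the Hessian of φ at s = u has entries ∂²φ/∂s_j∂s_{j'}(u) = −⟨∂Φ/∂u_{j'}(u,v), ∂N/∂u_j(u)⟩, and this k×k Hessian matrix is invertible; hence s = u is an isolated nondegenerate critical point of φ. -/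
open MeasureTheory Real Set

set_option maxHeartbeats 1000000 in
/-- For the phase `φ(s) = (Φ(u,v) − α(s))·N(s)` on a constant-rank-`k` ruled
hypersurface, `s = u` is a critical point, the Hessian of `φ` at `u` has entries
`−⟨∂Φ/∂u_{j'}(u,v), ∂N/∂u_j(u)⟩` and is invertible; hence `s = u` is an isolated
nondegenerate critical point. -/
theorem statement11 (d k : ℕ) (hk1 : 1 ≤ k) (hkd : k ≤ d)
    (U : Set (EuclideanSpace ℝ (Fin k))) (V : Set (EuclideanSpace ℝ (Fin (d - k))))
    (hUo : IsOpen U) (hUb : Bornology.IsBounded U)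
    (hU0 : (0 : EuclideanSpace ℝ (Fin k)) ∈ U)
    (hVo : IsOpen V) (hVb : Bornology.IsBounded V)
    (hV0 : (0 : EuclideanSpace ℝ (Fin (d - k))) ∈ V)
    (α : EuclideanSpace ℝ (Fin k) → EuclideanSpace ℝ (Fin (d + 1)))
    (w : Fin (d - k) → EuclideanSpace ℝ (Fin k) → EuclideanSpace ℝ (Fin (d + 1)))
    (hα : ContDiff ℝ (⊤ : ℕ∞) α) (hw : ∀ l, ContDiff ℝ (⊤ : ℕ∞) (w l))
    (Φ : EuclideanSpace ℝ (Fin k) → EuclideanSpace ℝ (Fin (d - k)) →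
      EuclideanSpace ℝ (Fin (d + 1)))
    (hΦ : ∀ u v, Φ u v = α u + ∑ l : Fin (d - k), v l • w l u)
    (N : EuclideanSpace ℝ (Fin k) → EuclideanSpace ℝ (Fin (d + 1)))
    (hN : ContDiff ℝ (⊤ : ℕ∞) N) (hNu : ∀ u, ‖N u‖ = 1)
    (horth1 : ∀ u ∈ U, ∀ v ∈ V, ∀ j : Fin k,
      (inner ℝ (fderiv ℝ (fun u' => Φ u' v) u (EuclideanSpace.single j 1)) (N u) : ℝ) = 0)
    (horth2 : ∀ u ∈ U, ∀ l : Fin (d - k), (inner ℝ (w l u) (N u) : ℝ) = 0)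
    (hrank : ∀ u ∈ U, ∀ v ∈ V,
      (Matrix.of fun j j' : Fin k =>
        (inner ℝ
          (fderiv ℝ (fun u1 => fderiv ℝ (fun u2 => Φ u2 v) u1 (EuclideanSpace.single j' 1)) u
            (EuclideanSpace.single j 1)) (N u) : ℝ)).det ≠ 0)
    (u : EuclideanSpace ℝ (Fin k)) (v : EuclideanSpace ℝ (Fin (d - k)))
    (hu : u ∈ U) (hv : v ∈ V)
    (φ : EuclideanSpace ℝ (Fin k) → ℝ)
    (hφ : ∀ s, φ s = (inner ℝ (Φ u v - α s) (N s) : ℝ)) :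
    -- `s = u` is a critical point of `φ`
    fderiv ℝ φ u = 0 ∧
    -- the Hessian entries of `φ` at `s = u`
    (∀ j j' : Fin k,
      fderiv ℝ (fun s => fderiv ℝ φ s (EuclideanSpace.single j' 1)) u
          (EuclideanSpace.single j 1) =
        -(inner ℝ (fderiv ℝ (fun u' => Φ u' v) u (EuclideanSpace.single j' 1))
            (fderiv ℝ N u (EuclideanSpace.single j 1)) : ℝ)) ∧
    -- the Hessian matrix is invertible
    (Matrix.of fun j j' : Fin k =>
      fderiv ℝ (fun s => fderiv ℝ φ s (EuclideanSpace.single j' 1)) u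
        (EuclideanSpace.single j 1)).det ≠ 0 ∧
    -- hence `u` is an isolated critical point of `φ`
    (∃ ε : ℝ, 0 < ε ∧ ∀ s ∈ Metric.ball u ε, fderiv ℝ φ s = 0 → s = u) := by
  classical
  have h1top : (1 : WithTop ℕ∞) ≤ ((⊤ : ℕ∞) : WithTop ℕ∞) := by exact_mod_cast le_top
  have hne0 : ((⊤ : ℕ∞) : WithTop ℕ∞) ≠ 0 := (zero_lt_one.trans_le h1top).ne'
  have htop1 : ((⊤ : ℕ∞) : WithTop ℕ∞) + 1 ≤ ((⊤ : ℕ∞) : WithTop ℕ∞) := by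
    exact_mod_cast le_top
  have hαd : Differentiable ℝ α := hα.differentiable hne0
  have hwd : ∀ l, Differentiable ℝ (w l) := fun l => (hw l).differentiable hne0
  have hNdiff : Differentiable ℝ N := hN.differentiable hne0
  have hα2 : Differentiable ℝ (fderiv ℝ α) :=
    (hα.fderiv_right htop1).differentiable hne0
  have hN2 : Differentiable ℝ (fderiv ℝ N) :=
    (hN.fderiv_right htop1).differentiable hne0
  set c : EuclideanSpace ℝ (Fin (d + 1)) := Φ u v with hc
  have hφf : φ = fun s => (inner ℝ (c - α s) (N s) : ℝ) := funext hφ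
  have hφC : ContDiff ℝ (⊤ : ℕ∞) φ := by
    rw [hφf]; exact (contDiff_const.sub hα).inner ℝ hN
  have hφd : Differentiable ℝ φ := hφC.differentiable hne0
  -- expansion of Φ(·, vv)
  have hΦfun : ∀ vv : EuclideanSpace ℝ (Fin (d - k)),
      (fun u' => Φ u' vv) = fun u' => α u' + ∑ l, vv l • w l u' :=
    fun vv => funext fun s => hΦ s vv
  have hΦhas : ∀ (vv : EuclideanSpace ℝ (Fin (d - k))) (s),
      HasFDerivAt (fun u' => Φ u' vv)
        (fderiv ℝ α s + ∑ l, vv l • fderiv ℝ (w l) s) s := by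
    intro vv s
    rw [hΦfun vv]
    exact ((hαd s).hasFDerivAt).add
      (HasFDerivAt.fun_sum fun l _ => ((hwd l s).hasFDerivAt).const_smul (vv l))
  have hΦfd : ∀ (vv : EuclideanSpace ℝ (Fin (d - k))) (s y),
      fderiv ℝ (fun u' => Φ u' vv) s y
        = fderiv ℝ α s y + ∑ l, vv l • fderiv ℝ (w l) s y := by
    intro vv s y
    rw [(hΦhas vv s).fderiv]
    simp [ContinuousLinearMap.sum_apply]
  -- separated orthogonality: tangent of α
  have hAN : ∀ s ∈ U, ∀ j : Fin k,
      (inner ℝ (fderiv ℝ α s (EuclideanSpace.single j 1)) (N s) : ℝ) = 0 := by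
    intro s hs j
    have h0 := horth1 s hs 0 hV0 j
    rw [hΦfd] at h0
    simpa using h0
  -- separated orthogonality: derivatives of rulings
  have hWN : ∀ s ∈ U, ∀ (l) (j : Fin k),
      (inner ℝ (fderiv ℝ (w l) s (EuclideanSpace.single j 1)) (N s) : ℝ) = 0 := by
    intro s hs l j
    obtain ⟨ε, hε, hball⟩ := Metric.isOpen_iff.mp hVo 0 hV0
    have htV : (ε / 2) • EuclideanSpace.single l (1 : ℝ) ∈ V := by
      apply hball
      have hns : ‖(ε / 2) • EuclideanSpace.single l (1 : ℝ)‖ = ε / 2 := by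
        rw [norm_smul, EuclideanSpace.norm_single, norm_one, mul_one, Real.norm_eq_abs,
          abs_of_pos (by linarith)]
      rw [Metric.mem_ball, dist_zero_right, hns]
      linarith
    have h0 := horth1 s hs _ htV j
    rw [hΦfd] at h0
    have hsum : ∑ l', ((ε / 2) • EuclideanSpace.single l (1 : ℝ)) l'
          • fderiv ℝ (w l') s (EuclideanSpace.single j 1)
        = (ε / 2) • fderiv ℝ (w l) s (EuclideanSpace.single j 1) := by
      rw [Finset.sum_eq_single l]
      · simp [EuclideanSpace.single_apply]
      · intro b _ hb
        simp [EuclideanSpace.single_apply, hb]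
      · simp
    rw [hsum, inner_add_left, hAN s hs j, real_inner_smul_left, zero_add] at h0
    exact (mul_eq_zero.mp h0).resolve_left (by positivity)
  -- fderiv of a function vanishing on U
  have hzero : ∀ f : EuclideanSpace ℝ (Fin k) → ℝ, (∀ x ∈ U, f x = 0) →
      ∀ s ∈ U, fderiv ℝ f s = 0 := by
    intro f hf s hs
    have hev : f =ᶠ[nhds s] fun _ => (0 : ℝ) := by
      filter_upwards [hUo.mem_nhds hs] with x hx using hf x hx
    rw [hev.fderiv_eq]
    exact fderiv_const_apply 0
  -- w l ⊥ ∂N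
  have hwN : ∀ s ∈ U, ∀ (l) (j : Fin k),
      (inner ℝ (w l s) (fderiv ℝ N s (EuclideanSpace.single j 1)) : ℝ) = 0 := by
    intro s hs l j
    have h1 : fderiv ℝ (fun x => (inner ℝ (w l x) (N x) : ℝ)) s = 0 :=
      hzero _ (fun x hx => horth2 x hx l) s hs
    have h2 := fderiv_inner_apply (𝕜 := ℝ) (x := s) ((hwd l).differentiableAt)
      (hNdiff.differentiableAt) (EuclideanSpace.single j 1)
    rw [h1] at h2
    simp only [ContinuousLinearMap.zero_apply] at h2
    have h3 := hWN s hs l j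
    linarith [h2, h3]
  -- formula for fderiv φ
  have hdφ : ∀ s y, fderiv ℝ φ s y
      = (inner ℝ (c - α s) (fderiv ℝ N s y) : ℝ)
        - inner ℝ (fderiv ℝ α s y) (N s) := by
    intro s y
    rw [hφf, fderiv_inner_apply (𝕜 := ℝ)
      (((differentiable_const c).fun_sub hαd).differentiableAt) (hNdiff.differentiableAt),
      fderiv_const_sub, ContinuousLinearMap.neg_apply, inner_neg_left]
    ring
  have hca : c - α u = ∑ l, v l • w l u := by
    rw [hc, hΦ u v, add_sub_cancel_left]
  -- Part 1 : critical point
  have hcrit : ∀ j : Fin k, fderiv ℝ φ u (EuclideanSpace.single j 1) = 0 := by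
    intro j
    rw [hdφ u _, hca, sum_inner, hAN u hu j]
    have hz : ∀ l ∈ Finset.univ,
        (inner ℝ (v l • w l u) (fderiv ℝ N u (EuclideanSpace.single j 1)) : ℝ) = 0 :=
      fun l _ => by rw [real_inner_smul_left, hwN u hu l j, mul_zero]
    rw [Finset.sum_eq_zero hz]
    ring
  have part1 : fderiv ℝ φ u = 0 := by
    apply ContinuousLinearMap.ext
    intro y
    have hy : y = ∑ j, y j • EuclideanSpace.single j (1 : ℝ) := by
      have hb := (EuclideanSpace.basisFun (Fin k) ℝ).sum_repr y
      simp only [EuclideanSpace.basisFun_apply, EuclideanSpace.basisFun_repr] at hb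
      exact hb.symm
    rw [hy, map_sum]
    simp [_root_.map_smul, hcrit]
  -- second-level applications
  have hNe : ∀ z, Differentiable ℝ (fun s => fderiv ℝ N s z) :=
    fun z => hN2.clm_apply (differentiable_const z)
  have hαe : ∀ z, Differentiable ℝ (fun s => fderiv ℝ α s z) :=
    fun z => hα2.clm_apply (differentiable_const z)
  -- fderiv φ applied at a fixed basis vector, as a function of s
  have hgfun : ∀ j' : Fin k,
      (fun s => fderiv ℝ φ s (EuclideanSpace.single j' 1))
        = fun s => (inner ℝ (c - α s) (fderiv ℝ N s (EuclideanSpace.single j' 1)) : ℝ)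
            - inner ℝ (fderiv ℝ α s (EuclideanSpace.single j' 1)) (N s) :=
    fun j' => funext fun s => hdφ s _
  -- derivative of the inner-product of w l with ∂N vanishes on U
  have hwD : ∀ (l) (j j' : Fin k),
      (inner ℝ (w l u)
        (fderiv ℝ (fun s => fderiv ℝ N s (EuclideanSpace.single j' 1)) u
          (EuclideanSpace.single j 1)) : ℝ)
      = - inner ℝ (fderiv ℝ (w l) u (EuclideanSpace.single j 1))
          (fderiv ℝ N u (EuclideanSpace.single j' 1)) := by
    intro l j j'
    have h1 : fderiv ℝ (fun x =>
        (inner ℝ (w l x) (fderiv ℝ N x (EuclideanSpace.single j' 1)) : ℝ)) u = 0 :=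
      hzero _ (fun x hx => hwN x hx l j') u hu
    have h2 := fderiv_inner_apply (𝕜 := ℝ) (x := u) ((hwd l).differentiableAt)
      ((hNe (EuclideanSpace.single j' 1)).differentiableAt) (EuclideanSpace.single j 1)
    rw [h1] at h2
    simp only [ContinuousLinearMap.zero_apply] at h2
    linarith [h2]
  have hT1 : ∀ j j' : Fin k,
      fderiv ℝ (fun s =>
          (inner ℝ (c - α s) (fderiv ℝ N s (EuclideanSpace.single j' 1)) : ℝ)) u
        (EuclideanSpace.single j 1)
      = -(inner ℝ (fderiv ℝ (fun u' => Φ u' v) u (EuclideanSpace.single j 1))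
          (fderiv ℝ N u (EuclideanSpace.single j' 1)) : ℝ) := by
    intro j j'
    rw [fderiv_inner_apply (𝕜 := ℝ)
      (((differentiable_const c).fun_sub hαd).differentiableAt)
      ((hNe (EuclideanSpace.single j' 1)).differentiableAt),
      fderiv_const_sub, ContinuousLinearMap.neg_apply, inner_neg_left, hca, sum_inner,
      hΦfd v u (EuclideanSpace.single j 1), inner_add_left, sum_inner]
    simp only [real_inner_smul_left, hwD, mul_neg]
    rw [Finset.sum_neg_distrib]
    ring
  have hT2 : ∀ j' : Fin k, fderiv ℝ (fun s =>
      (inner ℝ (fderiv ℝ α s (EuclideanSpace.single j' 1)) (N s) : ℝ)) u = 0 :=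
    fun j' => hzero _ (fun x hx => hAN x hx j') u hu
  have hHessEq : ∀ j j' : Fin k,
      fderiv ℝ (fun s => fderiv ℝ φ s (EuclideanSpace.single j' 1)) u
        (EuclideanSpace.single j 1)
      = -(inner ℝ (fderiv ℝ (fun u' => Φ u' v) u (EuclideanSpace.single j 1))
          (fderiv ℝ N u (EuclideanSpace.single j' 1)) : ℝ) := by
    intro j j'
    rw [hgfun j']
    rw [fderiv_fun_sub
      ((((differentiable_const c).fun_sub hαd).inner ℝ
        (hNe (EuclideanSpace.single j' 1))).differentiableAt)
      (((hαe (EuclideanSpace.single j' 1)).inner ℝ hNdiff).differentiableAt)]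
    rw [ContinuousLinearMap.sub_apply, hT2 j', ContinuousLinearMap.zero_apply, sub_zero,
      hT1 j j']
  -- smoothness of Φ(·,v)
  have hΨC : ContDiff ℝ (⊤ : ℕ∞) (fun u' => Φ u' v) := by
    rw [hΦfun v]
    exact hα.add (ContDiff.sum fun l _ => (hw l).const_smul (v l))
  have hΨdiff : Differentiable ℝ (fun u' => Φ u' v) := hΨC.differentiable hne0
  have hΨ2 : Differentiable ℝ (fderiv ℝ (fun u' => Φ u' v)) :=
    (hΨC.fderiv_right htop1).differentiable hne0
  have happly : ∀ z y : EuclideanSpace ℝ (Fin k),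
      fderiv ℝ (fun s => fderiv ℝ (fun u' => Φ u' v) s z) u y
        = (fderiv ℝ (fderiv ℝ (fun u' => Φ u' v)) u y) z := by
    intro z y
    rw [fderiv_clm_apply (hΨ2.differentiableAt) (differentiableAt_const z)]
    simp
  have hsymm : ∀ y z : EuclideanSpace ℝ (Fin k),
      fderiv ℝ (fderiv ℝ (fun u' => Φ u' v)) u y z
        = fderiv ℝ (fderiv ℝ (fun u' => Φ u' v)) u z y :=
    fun y z => second_derivative_symmetric
      (fun x => (hΨdiff x).hasFDerivAt) ((hΨ2 u).hasFDerivAt) y z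
  have hswap : ∀ a b : Fin k,
      (inner ℝ (fderiv ℝ (fun u' => Φ u' v) u (EuclideanSpace.single a 1))
        (fderiv ℝ N u (EuclideanSpace.single b 1)) : ℝ)
      = - inner ℝ ((fderiv ℝ (fderiv ℝ (fun u' => Φ u' v)) u (EuclideanSpace.single b 1))
          (EuclideanSpace.single a 1)) (N u) := by
    intro a b
    have h1 : fderiv ℝ (fun x =>
        (inner ℝ (fderiv ℝ (fun u' => Φ u' v) x (EuclideanSpace.single a 1)) (N x) : ℝ)) u
        = 0 := hzero _ (fun x hx => horth1 x hx v hv a) u hu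
    have h2 := fderiv_inner_apply (𝕜 := ℝ) (x := u)
      ((hΨ2.clm_apply (differentiable_const (EuclideanSpace.single a 1))).differentiableAt)
      (hNdiff.differentiableAt) (EuclideanSpace.single b 1)
    rw [h1] at h2
    simp only [ContinuousLinearMap.zero_apply] at h2
    rw [happly (EuclideanSpace.single a 1) (EuclideanSpace.single b 1)] at h2
    linarith [h2]
  have part2 : ∀ j j' : Fin k,
      fderiv ℝ (fun s => fderiv ℝ φ s (EuclideanSpace.single j' 1)) u
        (EuclideanSpace.single j 1)
      = -(inner ℝ (fderiv ℝ (fun u' => Φ u' v) u (EuclideanSpace.single j' 1))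
          (fderiv ℝ N u (EuclideanSpace.single j 1)) : ℝ) := by
    intro j j'
    rw [hHessEq j j', hswap j j', hswap j' j,
      hsymm (EuclideanSpace.single j 1) (EuclideanSpace.single j' 1)]
  -- Part 3 : nondegeneracy
  have part3 : (Matrix.of fun j j' : Fin k =>
      fderiv ℝ (fun s => fderiv ℝ φ s (EuclideanSpace.single j' 1)) u
        (EuclideanSpace.single j 1)).det ≠ 0 := by
    have hMeq : (Matrix.of fun j j' : Fin k =>
        fderiv ℝ (fun s => fderiv ℝ φ s (EuclideanSpace.single j' 1)) u
          (EuclideanSpace.single j 1))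
        = (Matrix.of fun j j' : Fin k =>
          (inner ℝ
            (fderiv ℝ (fun u1 => fderiv ℝ (fun u2 => Φ u2 v) u1
                (EuclideanSpace.single j' 1)) u (EuclideanSpace.single j 1))
            (N u) : ℝ)) := by
      apply Matrix.ext
      intro j j'
      simp only [Matrix.of_apply]
      rw [hHessEq j j', hswap j j', neg_neg,
        hsymm (EuclideanSpace.single j' 1) (EuclideanSpace.single j 1),
        ← happly (EuclideanSpace.single j' 1) (EuclideanSpace.single j 1)]
    rw [hMeq]
    exact hrank u hu v hv
  refine ⟨part1, part2, part3, ?_⟩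
  -- Part 4 : isolated critical point
  have hφ2C : ContDiff ℝ (⊤ : ℕ∞) (fderiv ℝ φ) := hφC.fderiv_right htop1
  have hφ2d : Differentiable ℝ (fderiv ℝ φ) := hφ2C.differentiable hne0
  have hstrict : HasStrictFDerivAt (fderiv ℝ φ) (fderiv ℝ (fderiv ℝ φ) u) u :=
    hφ2C.contDiffAt.hasStrictFDerivAt hne0
  have happlyφ : ∀ z y : EuclideanSpace ℝ (Fin k),
      fderiv ℝ (fun s => fderiv ℝ φ s z) u y = (fderiv ℝ (fderiv ℝ φ) u y) z := by
    intro z y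
    rw [fderiv_clm_apply (hφ2d.differentiableAt) (differentiableAt_const z)]
    simp
  have hinj : Function.Injective (fderiv ℝ (fderiv ℝ φ) u) := by
    have hdet : IsUnit (Matrix.of fun j j' : Fin k =>
        fderiv ℝ (fun s => fderiv ℝ φ s (EuclideanSpace.single j' 1)) u
          (EuclideanSpace.single j 1)) :=
      (Matrix.isUnit_iff_isUnit_det _).mpr (isUnit_iff_ne_zero.mpr part3)
    have hker : ∀ z : EuclideanSpace ℝ (Fin k),
        fderiv ℝ (fderiv ℝ φ) u z = 0 → z = 0 := by
      intro z hz
      have hzexp : z = ∑ j, z j • EuclideanSpace.single j (1 : ℝ) := by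
        have hb := (EuclideanSpace.basisFun (Fin k) ℝ).sum_repr z
        simp only [EuclideanSpace.basisFun_apply, EuclideanSpace.basisFun_repr] at hb
        exact hb.symm
      have hvec : Matrix.vecMul (fun j => z j)
          (Matrix.of fun j j' : Fin k =>
            fderiv ℝ (fun s => fderiv ℝ φ s (EuclideanSpace.single j' 1)) u
              (EuclideanSpace.single j 1)) = 0 := by
        funext j'
        have hz' : fderiv ℝ (fderiv ℝ φ) u z (EuclideanSpace.single j' 1) = 0 := by
          rw [hz]; simp
        rw [hzexp, map_sum] at hz'
        simp only [_root_.map_smul, ContinuousLinearMap.sum_apply,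
          ContinuousLinearMap.smul_apply, smul_eq_mul] at hz'
        simpa [Matrix.vecMul, dotProduct, Matrix.of_apply, happlyφ,
          mul_comm] using hz'
      have hzero' : (fun j => z j) = 0 := by
        have hvinj := Matrix.vecMul_injective_iff_isUnit.mpr hdet
        apply hvinj
        show Matrix.vecMul _ _ = Matrix.vecMul _ _
        rw [hvec, Matrix.zero_vecMul]
      have : ∀ j, z j = 0 := fun j => congrFun hzero' j
      ext j
      exact this j
    intro x y hxy
    have h0 : fderiv ℝ (fderiv ℝ φ) u (x - y) = 0 := by
      rw [map_sub, hxy, sub_self]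
    have := hker _ h0
    exact sub_eq_zero.mp this
  obtain ⟨K, hK0, hKanti⟩ :=
    LinearMap.exists_antilipschitzWith ((fderiv ℝ (fderiv ℝ φ) u) :
      EuclideanSpace ℝ (Fin k) →ₗ[ℝ] (EuclideanSpace ℝ (Fin k) →L[ℝ] ℝ))
      (LinearMap.ker_eq_bot.mpr hinj)
  have hKpos : (0 : ℝ) < (K : ℝ) := hK0
  have hev := hstrict.isLittleO.def (show (0:ℝ) < (2 * (K:ℝ))⁻¹ by positivity)
  have hten : Filter.Tendsto (fun s => (s, u)) (nhds u) (nhds (u, u)) :=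
    (continuous_id.prodMk continuous_const).tendsto' u (u, u) rfl
  have hev2 := hten.eventually hev
  rw [Metric.eventually_nhds_iff] at hev2
  obtain ⟨ε, hε, hball⟩ := hev2
  refine ⟨ε, hε, ?_⟩
  intro s hs hcrit'
  have hb := hball (by rwa [Metric.mem_ball] at hs)
  simp only [hcrit', part1, zero_sub, sub_zero, zero_sub, norm_neg] at hb
  have h2 : ‖s - u‖ ≤ (K : ℝ) * ‖fderiv ℝ (fderiv ℝ φ) u (s - u)‖ := by
    have h := hKanti.le_mul_dist s u
    rwa [dist_eq_norm, dist_eq_norm, ← map_sub] at h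
  have hhalf : (K : ℝ) * ((2 * (K : ℝ))⁻¹ * ‖s - u‖) = ‖s - u‖ / 2 := by
    field_simp
  have hle : ‖s - u‖ ≤ ‖s - u‖ / 2 := by
    calc ‖s - u‖ ≤ (K : ℝ) * ‖fderiv ℝ (fderiv ℝ φ) u (s - u)‖ := h2
    _ ≤ (K : ℝ) * ((2 * (K : ℝ))⁻¹ * ‖s - u‖) := by
        apply mul_le_mul_of_nonneg_left _ (le_of_lt hKpos)
        exact hb
    _ = ‖s - u‖ / 2 := hhalf
  have hz : ‖s - u‖ ≤ 0 := by linarith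
  have : s - u = 0 := norm_le_zero_iff.mp hz
  exact sub_eq_zero.mp this
end

section
/- Let μ₀ be a finite Borel measure on ℝ^n and α > 0 with sup_{ξ∈ℝ^n, ξ≠0} |ξ|^α |μ̂₀(ξ)| < ∞. Let f be a nonnegative Schwartz function on ℝ^n and let μ be the measure with dμ = f dμ₀. Then there is a constant c_μ > 0 such that |μ̂(ξ)| ≤ c_μ |ξ|^{−α} for all ξ ≠ 0. -/
open MeasureTheory Real Set
open scoped FourierTransform RealInnerProductSpace NNReal ENNReal

set_option maxHeartbeats 1000000 in
/-- If `μ₀` is a finite Borel measure on `ℝ^n` with `sup_{ξ≠0} |ξ|^α |μ̂₀(ξ)| < ∞` and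
`f ≥ 0` is a Schwartz function, then `μ` with `dμ = f dμ₀` satisfies
`|μ̂(ξ)| ≤ c_μ |ξ|^{−α}` for all `ξ ≠ 0`. -/
theorem statement14 (n : ℕ)
    (μ₀ : Measure (EuclideanSpace ℝ (Fin n))) (hμ₀ : IsFiniteMeasure μ₀)
    (a : ℝ) (ha : 0 < a) (C₀ : ℝ)
    (hdecay : ∀ ξ : EuclideanSpace ℝ (Fin n), ξ ≠ 0 →
      ‖ξ‖ ^ a * ‖mft μ₀ ξ‖ ≤ C₀)
    (f : SchwartzMap (EuclideanSpace ℝ (Fin n)) ℝ) (hf : ∀ x, 0 ≤ f x)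
    (μ : Measure (EuclideanSpace ℝ (Fin n)))
    (hμ : μ = μ₀.withDensity fun x => ENNReal.ofReal (f x)) :
    ∃ c : ℝ, 0 < c ∧ ∀ ξ : EuclideanSpace ℝ (Fin n), ξ ≠ 0 →
      ‖mft μ ξ‖ ≤ c * ‖ξ‖ ^ (-a) := by
  classical
  haveI := hμ₀
  -- the complex-valued Schwartz function associated to `f`
  set g : SchwartzMap (EuclideanSpace ℝ (Fin n)) ℂ :=
    SchwartzMap.bilinLeftCLM (ContinuousLinearMap.lsmul ℝ ℝ : ℝ →L[ℝ] ℂ →L[ℝ] ℂ)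
      (Function.HasTemperateGrowth.const (1:ℂ)) f with hg
  have hgx : ∀ x, g x = (f x : ℂ) := by
    intro x
    show (f x) • (1:ℂ) = (f x : ℂ)
    simp [Complex.real_smul]
  set G := SchwartzMap.fourierTransformCLM ℂ g with hG
  have hInv : ∀ x, (f x : ℂ) =
      ∫ η, Complex.exp ((↑(2 * π * ⟪η, x⟫) : ℂ) * Complex.I) • G η := by
    intro x
    rw [← hgx x]
    conv_lhs => rw [← Continuous.fourierInv_fourier_eq g.continuous g.integrable G.integrable]
    rw [Real.fourierInv_eq']
    rfl
  clear hG hg hgx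
  clear_value G
  clear g
  -- the exponential kernel
  set E : EuclideanSpace ℝ (Fin n) → EuclideanSpace ℝ (Fin n) → ℂ :=
    fun x ζ => Complex.exp (((-2 * Real.pi * inner ℝ x ζ : ℝ) : ℂ) * Complex.I) with hE
  have hEnorm : ∀ x ζ, ‖E x ζ‖ = 1 := fun x ζ => Complex.norm_exp_ofReal_mul_I _
  have hmft : ∀ (ν : Measure (EuclideanSpace ℝ (Fin n))) ζ, mft ν ζ = ∫ x, E x ζ ∂ν :=
    fun ν ζ => rfl
  set M₀ : ℝ := (μ₀ Set.univ).toReal with hM₀def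
  have hM₀0 : 0 ≤ M₀ := ENNReal.toReal_nonneg
  have hM₀ : ∀ ζ, ‖mft μ₀ ζ‖ ≤ M₀ := by
    intro ζ
    rw [hmft]
    refine (norm_integral_le_integral_norm _).trans ?_
    simp [hEnorm]
    exact le_rfl
  -- the measure `μ` expressed through `μ₀`
  have hA : ∀ ζ, mft μ ζ = ∫ x, (f x : ℂ) * E x ζ ∂μ₀ := by
    intro ζ
    rw [hmft, hμ]
    rw [show (fun x => ENNReal.ofReal (f x)) = (fun x => ((Real.toNNReal (f x) : ℝ≥0) : ℝ≥0∞))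
      from rfl]
    rw [integral_withDensity_eq_integral_smul
      (f.continuous.measurable.real_toNNReal) (fun x => E x ζ)]
    congr 1
    funext x
    rw [NNReal.smul_def, Real.coe_toNNReal _ (hf x), Complex.real_smul]
  set Mf : ℝ := ∫ x, f x ∂μ₀ with hMfdef
  have hMf0 : 0 ≤ Mf := integral_nonneg hf
  have hMfb : ∀ ζ, ‖mft μ ζ‖ ≤ Mf := by
    intro ζ
    rw [hA]
    refine (norm_integral_le_integral_norm _).trans ?_
    refine le_of_eq ?_
    congr 1
    funext x
    simp [hEnorm, abs_of_nonneg (hf x)]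
  -- constants
  set k : ℕ := ⌈a⌉₊ with hk
  set C₁ : ℝ := max C₀ 0 with hC₁
  have hC₁0 : 0 ≤ C₁ := le_max_right _ _
  set I₀ : ℝ := ∫ η, ‖G η‖ with hI₀
  have hI₀0 : 0 ≤ I₀ := integral_nonneg fun η => norm_nonneg _
  set Ik : ℝ := ∫ η, ‖η‖ ^ k * ‖G η‖ with hIk
  have hIk0 : 0 ≤ Ik := integral_nonneg fun η => by positivity
  have hX0 : 0 ≤ C₁ * 2 ^ a * I₀ + M₀ * 2 ^ k * Ik := by
    have h1 : 0 ≤ C₁ * 2 ^ a * I₀ :=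
      mul_nonneg (mul_nonneg hC₁0 (Real.rpow_nonneg (by norm_num) _)) hI₀0
    have h2 : 0 ≤ M₀ * 2 ^ k * Ik := mul_nonneg (mul_nonneg hM₀0 (by positivity)) hIk0
    linarith
  refine ⟨Mf + (C₁ * 2 ^ a * I₀ + M₀ * 2 ^ k * Ik) + 1, by linarith, ?_⟩
  intro ξ hξ
  have hξn : (0 : ℝ) < ‖ξ‖ := norm_pos_iff.mpr hξ
  have hra : (0 : ℝ) < ‖ξ‖ ^ (-a) := Real.rpow_pos_of_pos hξn _
  rcases le_or_gt ‖ξ‖ 1 with h1 | h1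
  · -- small `ξ`: the trivial bound suffices
    have h1' : (1 : ℝ) ≤ ‖ξ‖ ^ (-a) :=
      Real.one_le_rpow_of_pos_of_le_one_of_nonpos hξn h1 (neg_nonpos.mpr ha.le)
    calc ‖mft μ ξ‖ ≤ Mf := hMfb ξ
      _ ≤ Mf * ‖ξ‖ ^ (-a) := le_mul_of_one_le_right hMf0 h1'
      _ ≤ (Mf + (C₁ * 2 ^ a * I₀ + M₀ * 2 ^ k * Ik) + 1) * ‖ξ‖ ^ (-a) := by
          refine mul_le_mul_of_nonneg_right ?_ hra.le
          linarith
  · -- large `ξ`: Fubini and the decay of `μ̂₀` and of `𝓕 f`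
    set F : EuclideanSpace ℝ (Fin n) × EuclideanSpace ℝ (Fin n) → ℂ :=
      fun p => E p.1 ξ * (Complex.exp ((↑(2 * π * ⟪p.2, p.1⟫) : ℂ) * Complex.I) * G p.2) with hF
    have hFcont : Continuous F := by
      rw [hF, hE]
      refine Continuous.mul ?_ (Continuous.mul ?_ (G.continuous.comp continuous_snd))
      · exact Complex.continuous_exp.comp ((Complex.continuous_ofReal.comp
          (continuous_const.mul (Continuous.inner continuous_fst continuous_const))).mul
          continuous_const)
      · exact Complex.continuous_exp.comp ((Complex.continuous_ofReal.comp
          (continuous_const.mul (Continuous.inner continuous_snd continuous_fst))).mul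
          continuous_const)
    have hFnorm : ∀ p, ‖F p‖ = ‖G p.2‖ := by
      intro p
      show ‖E p.1 ξ * (Complex.exp ((↑(2 * π * ⟪p.2, p.1⟫) : ℂ) * Complex.I) * G p.2)‖ = _
      rw [norm_mul, hEnorm, one_mul, norm_mul,
        Complex.norm_exp_ofReal_mul_I, one_mul]
    have hFint : Integrable F (μ₀.prod volume) := by
      rw [integrable_prod_iff hFcont.aestronglyMeasurable]
      constructor
      · refine Filter.Eventually.of_forall fun x => ?_
        have h1 : Integrable (fun η => Complex.exp ((↑(2 * π * ⟪η, x⟫) : ℂ) * Complex.I) * G η)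
            volume := by
          refine Integrable.bdd_mul (c := 1) G.integrable ?_ (Filter.Eventually.of_forall fun η => ?_)
          · refine Continuous.aestronglyMeasurable (Complex.continuous_exp.comp ?_)
            exact (Complex.continuous_ofReal.comp
              (continuous_const.mul (Continuous.inner continuous_id continuous_const))).mul
              continuous_const
          · rw [Complex.norm_exp_ofReal_mul_I]
        exact Integrable.const_mul h1 (E x ξ)
      · have heq : (fun x => ∫ η, ‖F (x, η)‖) = fun _ => ∫ η, ‖G η‖ := by
          funext x
          congr 1
          funext η
          exact hFnorm (x, η)
        rw [heq]
        exact integrable_const _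
    have hinner : ∀ η, ∫ x, F (x, η) ∂μ₀ = mft μ₀ (ξ - η) * G η := by
      intro η
      have hpt : ∀ x, F (x, η) = E x (ξ - η) * G η := by
        intro x
        show E x ξ * (Complex.exp ((↑(2 * π * ⟪η, x⟫) : ℂ) * Complex.I) * G η) = _
        rw [hE]
        simp only
        rw [← mul_assoc, ← Complex.exp_add]
        have hr2 : (-2 * π * inner ℝ x ξ : ℝ) + 2 * π * inner ℝ η x = -2 * π * inner ℝ x (ξ - η) := by
          rw [inner_sub_right, real_inner_comm η x]; ring
        have hr : ((-2 * π * inner ℝ x ξ : ℝ) : ℂ) * Complex.I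
            + ((2 * π * inner ℝ η x : ℝ) : ℂ) * Complex.I
            = ((-2 * π * inner ℝ x (ξ - η) : ℝ) : ℂ) * Complex.I := by
          rw [← hr2]; push_cast; ring
        rw [hr]
      simp_rw [hpt]
      rw [integral_mul_const, ← hmft]
    -- the key convolution identity
    have hmain : mft μ ξ = ∫ η, mft μ₀ (ξ - η) * G η := by
      have step1 : mft μ ξ = ∫ x, ∫ η, F (x, η) ∂volume ∂μ₀ := by
        rw [hA]
        congr 1
        funext x
        rw [mul_comm, hInv x]
        rw [← integral_const_mul]
        simp only [smul_eq_mul]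
        rfl
      rw [step1, integral_integral_swap hFint]
      congr 1
      funext η
      exact hinner η
    have h_int : Integrable (fun η => mft μ₀ (ξ - η) * G η) (volume) := by
      have h := hFint.integral_prod_right
      have heq : (fun η => ∫ x, F (x, η) ∂μ₀) = fun η => mft μ₀ (ξ - η) * G η :=
        funext hinner
      rwa [heq] at h
    -- estimates
    set Φ : EuclideanSpace ℝ (Fin n) → ℝ := fun η => ‖mft μ₀ (ξ - η)‖ * ‖G η‖ with hΦ
    have hΦint : Integrable Φ volume := by
      have := h_int.norm
      simpa [hΦ, norm_mul] using this
    set S : Set (EuclideanSpace ℝ (Fin n)) := Metric.closedBall 0 (‖ξ‖ / 2) with hS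
    have hSmeas : MeasurableSet S := measurableSet_closedBall
    have hbound1 : ‖mft μ ξ‖ ≤ ∫ η, Φ η := by
      rw [hmain]
      refine (norm_integral_le_integral_norm _).trans_eq ?_
      congr 1
      funext η
      rw [norm_mul]
    have hsplit : ∫ η, Φ η = (∫ η in S, Φ η) + ∫ η in Sᶜ, Φ η :=
      (integral_add_compl hSmeas hΦint).symm
    have hdecay' : ∀ ζ : EuclideanSpace ℝ (Fin n), ζ ≠ 0 → ‖mft μ₀ ζ‖ ≤ C₁ * ‖ζ‖ ^ (-a) := by
      intro ζ hζ
      have hζn : (0 : ℝ) < ‖ζ‖ := norm_pos_iff.mpr hζ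
      have hpow : (0 : ℝ) < ‖ζ‖ ^ a := Real.rpow_pos_of_pos hζn _
      have h := (hdecay ζ hζ).trans (le_max_left C₀ 0)
      rw [Real.rpow_neg (norm_nonneg _)]
      rw [mul_comm, ← le_div_iff₀ hpow] at h
      rw [div_eq_mul_inv] at h
      exact h
    have hS1 : ∫ η in S, Φ η ≤ C₁ * 2 ^ a * ‖ξ‖ ^ (-a) * I₀ := by
      have hpt : ∀ η ∈ S, Φ η ≤ (C₁ * 2 ^ a * ‖ξ‖ ^ (-a)) * ‖G η‖ := by
        intro η hη
        rw [hS, Metric.mem_closedBall, dist_zero_right] at hη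
        have hlow : ‖ξ‖ / 2 ≤ ‖ξ - η‖ := by
          have := norm_sub_norm_le ξ η
          linarith
        have hne : ξ - η ≠ 0 := by
          intro h0
          rw [h0, norm_zero] at hlow
          linarith
        have h2 : ‖mft μ₀ (ξ - η)‖ ≤ C₁ * ‖ξ - η‖ ^ (-a) := hdecay' _ hne
        have h3 : ‖ξ - η‖ ^ (-a) ≤ (‖ξ‖ / 2) ^ (-a) :=
          Real.rpow_le_rpow_of_nonpos (by linarith) hlow (neg_nonpos.mpr ha.le)
        have h4 : (‖ξ‖ / 2 : ℝ) ^ (-a) = 2 ^ a * ‖ξ‖ ^ (-a) := by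
          rw [div_eq_mul_inv, Real.mul_rpow (norm_nonneg _) (by norm_num),
            Real.inv_rpow (by norm_num), ← Real.rpow_neg (by norm_num), neg_neg, mul_comm]
        have h5 : ‖mft μ₀ (ξ - η)‖ ≤ C₁ * 2 ^ a * ‖ξ‖ ^ (-a) := by
          rw [mul_assoc, ← h4]
          exact h2.trans (mul_le_mul_of_nonneg_left h3 hC₁0)
        exact mul_le_mul_of_nonneg_right h5 (norm_nonneg _)
      calc ∫ η in S, Φ η ≤ ∫ η in S, (C₁ * 2 ^ a * ‖ξ‖ ^ (-a)) * ‖G η‖ :=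
            setIntegral_mono_on hΦint.integrableOn
              ((G.integrable.norm.const_mul _).integrableOn) hSmeas hpt
        _ ≤ ∫ η, (C₁ * 2 ^ a * ‖ξ‖ ^ (-a)) * ‖G η‖ :=
            setIntegral_le_integral (G.integrable.norm.const_mul _)
              (Filter.Eventually.of_forall fun η => by positivity)
        _ = C₁ * 2 ^ a * ‖ξ‖ ^ (-a) * I₀ := by rw [integral_const_mul]
    have hSc : ∫ η in Sᶜ, Φ η ≤ M₀ * 2 ^ k * ‖ξ‖ ^ (-a) * Ik := by
      have hxk : ‖ξ‖ ^ (-(k : ℝ)) = (‖ξ‖ ^ k)⁻¹ := by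
        rw [Real.rpow_neg (norm_nonneg _), Real.rpow_natCast]
      have hpt : ∀ η ∈ Sᶜ, Φ η ≤ (M₀ * 2 ^ k * ‖ξ‖ ^ (-(k:ℝ))) * (‖η‖ ^ k * ‖G η‖) := by
        intro η hη
        rw [hS, Set.mem_compl_iff, Metric.mem_closedBall, dist_zero_right, not_le] at hη
        have h2 : ‖ξ‖ ≤ 2 * ‖η‖ := by linarith
        have hb : ‖ξ‖ ^ k ≤ 2 ^ k * ‖η‖ ^ k := by
          calc ‖ξ‖ ^ k ≤ (2 * ‖η‖) ^ k := pow_le_pow_left₀ (norm_nonneg ξ) h2 k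
            _ = 2 ^ k * ‖η‖ ^ k := mul_pow _ _ _
        have hone : (1 : ℝ) ≤ 2 ^ k * ‖η‖ ^ k * (‖ξ‖ ^ k)⁻¹ := by
          rw [← div_eq_mul_inv]
          exact (one_le_div (pow_pos hξn k)).mpr hb
        have hmle : ‖mft μ₀ (ξ - η)‖ ≤ M₀ := hM₀ _
        rw [hxk]
        have hGn : (0:ℝ) ≤ ‖G η‖ := norm_nonneg _
        show ‖mft μ₀ (ξ - η)‖ * ‖G η‖ ≤ _
        nlinarith [mul_le_mul_of_nonneg_left hone (mul_nonneg hM₀0 hGn),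
          mul_le_mul_of_nonneg_right hmle hGn]
      calc ∫ η in Sᶜ, Φ η ≤ ∫ η in Sᶜ, (M₀ * 2 ^ k * ‖ξ‖ ^ (-(k:ℝ))) * (‖η‖ ^ k * ‖G η‖) :=
            setIntegral_mono_on hΦint.integrableOn
              (((G.integrable_pow_mul volume k).const_mul _).integrableOn) hSmeas.compl hpt
        _ ≤ ∫ η, (M₀ * 2 ^ k * ‖ξ‖ ^ (-(k:ℝ))) * (‖η‖ ^ k * ‖G η‖) :=
            setIntegral_le_integral ((G.integrable_pow_mul volume k).const_mul _)
              (Filter.Eventually.of_forall fun η => by positivity)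
        _ = M₀ * 2 ^ k * ‖ξ‖ ^ (-(k:ℝ)) * Ik := by rw [integral_const_mul]
        _ ≤ M₀ * 2 ^ k * ‖ξ‖ ^ (-a) * Ik := by
            have hexp : ‖ξ‖ ^ (-(k:ℝ)) ≤ ‖ξ‖ ^ (-a) := by
              refine Real.rpow_le_rpow_of_exponent_le h1.le ?_
              rw [hk]
              have := Nat.le_ceil a
              push_cast
              linarith [Nat.le_ceil a]
            have h20 : (0:ℝ) ≤ M₀ * 2 ^ k := by positivity
            nlinarith [mul_le_mul_of_nonneg_left hexp h20]
    calc ‖mft μ ξ‖ ≤ ∫ η, Φ η := hbound1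
      _ = (∫ η in S, Φ η) + ∫ η in Sᶜ, Φ η := hsplit
      _ ≤ C₁ * 2 ^ a * ‖ξ‖ ^ (-a) * I₀ + M₀ * 2 ^ k * ‖ξ‖ ^ (-a) * Ik := add_le_add hS1 hSc
      _ = (C₁ * 2 ^ a * I₀ + M₀ * 2 ^ k * Ik) * ‖ξ‖ ^ (-a) := by ring
      _ ≤ (Mf + (C₁ * 2 ^ a * I₀ + M₀ * 2 ^ k * Ik) + 1) * ‖ξ‖ ^ (-a) := by
          refine mul_le_mul_of_nonneg_right ?_ hra.le
          linarith
end
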